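/- arXiv:2510.17216 — 4 statements merged into one kernel-verified Lean document; each statement's English description precedes it below -/
import Mathlib

section
/- Let (A ♯_σ^× H, β ⊗ α) be a Radford [(m,k),m]-biproduct monoidal Hom-bialgebra with σ convolution invertible, and let φ^l(l ⊗ (a ⊗ h)) = (α(l₁₁)·β⁻¹(a)) σ(α^{k+2−m}(l₁₂), α^{k+1}(h₁)) ⊗ α^{1−m}(l₂)α(h₂) and φ^r((a ⊗ h) ⊗ l) = a σ(α^{k+1}(h₁), α^{k+1−m}(l₁)) ⊗ α(h₂)α^{1−m}(l₂). Then (A ♯_σ^× H, β ⊗ α, φ^l, φ^r) is a weak (H, α) Hom-bimodule: φ^l(1_H ⊗ x) = (β ⊗ α)(x) = φ^r(x ⊗ 1_H) and φ^l(α(l) ⊗ φ^r(x ⊗ g)) = φ^r(φ^l(l ⊗ x) ⊗ α(g)) for all l, g ∈ H and x ∈ A ⊗ H. -/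
open TensorProduct

noncomputable section

/-- A monoidal Hom-algebra `(A, β)`. -/
structure HomAlgebraStr (K : Type*) (A : Type*) [Field K] [AddCommGroup A] [Module K A] where
  mul : A →ₗ[K] A →ₗ[K] A
  one : A
  str : A ≃ₗ[K] A
  hom_assoc : ∀ a b c : A, mul (str a) (mul b c) = mul (mul a b) (str c)
  str_mul : ∀ a b : A, str (mul a b) = mul (str a) (str b)
  mul_one : ∀ a : A, mul a one = str a
  one_mul : ∀ a : A, mul one a = str a
  str_one : str one = one

/-- A monoidal Hom-coalgebra `(C, γ)`. -/
structure HomCoalgebraStr (K : Type*) (C : Type*) [Field K] [AddCommGroup C] [Module K C] where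
  comul : C →ₗ[K] C ⊗[K] C
  counit : C →ₗ[K] K
  str : C ≃ₗ[K] C
  hom_coassoc : ∀ c : C,
    TensorProduct.map str.symm.toLinearMap comul (comul c)
      = TensorProduct.assoc K C C C (TensorProduct.map comul str.symm.toLinearMap (comul c))
  comul_str : ∀ c : C, comul (str c) = TensorProduct.map str.toLinearMap str.toLinearMap (comul c)
  counit_comul_left : ∀ c : C,
    TensorProduct.lid K C (TensorProduct.map counit (LinearMap.id : C →ₗ[K] C) (comul c)) = str.symm c
  counit_comul_right : ∀ c : C,
    TensorProduct.rid K C (TensorProduct.map (LinearMap.id : C →ₗ[K] C) counit (comul c)) = str.symm c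
  counit_str : ∀ c : C, counit (str c) = counit c

/-- The componentwise multiplication on `N ⊗ N` induced by a bilinear multiplication on `N`. -/
def tensorSquareMul {K N : Type*} [Field K] [AddCommGroup N] [Module K N]
    (mul : N →ₗ[K] N →ₗ[K] N) :
    (N ⊗[K] N) →ₗ[K] (N ⊗[K] N) →ₗ[K] (N ⊗[K] N) :=
  TensorProduct.curry
    ((TensorProduct.map (TensorProduct.lift mul) (TensorProduct.lift mul)) ∘ₗ
      (TensorProduct.tensorTensorTensorComm K N N N N).toLinearMap)

/-- A monoidal Hom-bialgebra `(H, α)`. -/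
structure HomBialgebraStr (K : Type*) (H : Type*) [Field K] [AddCommGroup H] [Module K H]
    extends HomAlgebraStr K H where
  comul : H →ₗ[K] H ⊗[K] H
  counit : H →ₗ[K] K
  hom_coassoc : ∀ c : H,
    TensorProduct.map str.symm.toLinearMap comul (comul c)
      = TensorProduct.assoc K H H H (TensorProduct.map comul str.symm.toLinearMap (comul c))
  comul_str : ∀ c : H, comul (str c) = TensorProduct.map str.toLinearMap str.toLinearMap (comul c)
  counit_comul_left : ∀ c : H,
    TensorProduct.lid K H (TensorProduct.map counit (LinearMap.id : H →ₗ[K] H) (comul c)) = str.symm c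
  counit_comul_right : ∀ c : H,
    TensorProduct.rid K H (TensorProduct.map (LinearMap.id : H →ₗ[K] H) counit (comul c)) = str.symm c
  counit_str : ∀ c : H, counit (str c) = counit c
  comul_mul : ∀ a b : H, comul (mul a b) = tensorSquareMul mul (comul a) (comul b)
  comul_one : comul one = one ⊗ₜ[K] one
  counit_mul : ∀ a b : H, counit (mul a b) = counit a * counit b
  counit_one : counit one = 1

/-- A monoidal Hom-Hopf algebra `(H, α, S)`. -/
structure HomHopfStr (K : Type*) (H : Type*) [Field K] [AddCommGroup H] [Module K H]
    extends HomBialgebraStr K H where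
  antipode : H →ₗ[K] H
  antipode_str : ∀ h : H, antipode (str h) = str (antipode h)
  antipode_mul_left : ∀ h : H,
    TensorProduct.lift (mul ∘ₗ antipode) (comul h) = counit h • one
  antipode_mul_right : ∀ h : H,
    TensorProduct.lift (mul.compl₂ antipode) (comul h) = counit h • one

section Defs

variable {K H A C M : Type*} [Field K]
variable [AddCommGroup H] [Module K H] [AddCommGroup A] [Module K A]
variable [AddCommGroup C] [Module K C] [AddCommGroup M] [Module K M]

/-- `(A, β)` is a left weak `(H, α)`-Hom-module algebra via `act`:
`h·(ab) = (h₁·a)(h₂·b)` and `h·1 = ε(h)1`. -/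
structure IsWeakModuleAlgebra (HB : HomBialgebraStr K H) (AA : HomAlgebraStr K A)
    (act : H →ₗ[K] A →ₗ[K] A) : Prop where
  act_mul : ∀ (h : H) (a b : A),
    act h (AA.mul a b)
      = TensorProduct.lift AA.mul
          (TensorProduct.map (TensorProduct.lift act) (TensorProduct.lift act)
            (TensorProduct.map ((TensorProduct.mk K H A).flip a) ((TensorProduct.mk K H A).flip b)
              (HB.comul h)))
  act_one : ∀ h : H, act h AA.one = HB.counit h • AA.one

/-- `(C, β)` is a left `(H, α)`-Hom-comodule coalgebra via `coact a = a₍₋₁₎ ⊗ a₍₀₎`. -/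
structure IsComoduleCoalgebra (HB : HomBialgebraStr K H) (CC : HomCoalgebraStr K C)
    (coact : C →ₗ[K] H ⊗[K] C) : Prop where
  comodule_coassoc : ∀ c : C,
    TensorProduct.assoc K H H C
        (TensorProduct.map HB.comul CC.str.symm.toLinearMap (coact c))
      = TensorProduct.map HB.str.symm.toLinearMap coact (coact c)
  coact_str : ∀ c : C,
    coact (CC.str c) = TensorProduct.map HB.str.toLinearMap CC.str.toLinearMap (coact c)
  counit_coact : ∀ c : C,
    TensorProduct.lid K C (TensorProduct.map HB.counit (LinearMap.id : C →ₗ[K] C) (coact c))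
      = CC.str.symm c
  coact_comul : ∀ c : C,
    TensorProduct.map (LinearMap.id : H →ₗ[K] H) CC.comul (coact c)
      = TensorProduct.map (TensorProduct.lift HB.mul) (LinearMap.id : C ⊗[K] C →ₗ[K] C ⊗[K] C)
          (TensorProduct.tensorTensorTensorComm K H C H C
            (TensorProduct.map coact coact (CC.comul c)))
  counit_coact_one : ∀ c : C,
    TensorProduct.rid K H (TensorProduct.map (LinearMap.id : H →ₗ[K] H) CC.counit (coact c))
      = CC.counit c • HB.one

/-- The `(m,k)`-Hom-crossed product multiplication on simple tensors:
`(a ♯ h)(b ♯ g) = a[(α^m(h₁₁)·β⁻²(b)) σ(α^{k+1}(h₁₂), α^k(g₁))] ♯ α(h₂g₂)`. -/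
def cpMulElem (HB : HomBialgebraStr K H) (AA : HomAlgebraStr K A)
    (act : H →ₗ[K] A →ₗ[K] A) (σ : H →ₗ[K] H →ₗ[K] A) (m k : ℤ)
    (a : A) (h : H) (b : A) (g : H) : A ⊗[K] H :=
  TensorProduct.map
    ((AA.mul a) ∘ₗ TensorProduct.lift AA.mul ∘ₗ
      TensorProduct.map
        ((act.flip ((AA.str ^ (-2 : ℤ)) b)) ∘ₗ (HB.str ^ m).toLinearMap)
        (TensorProduct.lift σ ∘ₗ
          TensorProduct.map (HB.str ^ (k+1)).toLinearMap (HB.str ^ k).toLinearMap) ∘ₗ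
      (TensorProduct.assoc K H H H).toLinearMap)
    (HB.str.toLinearMap ∘ₗ TensorProduct.lift HB.mul)
    (TensorProduct.map (TensorProduct.map HB.comul (LinearMap.id : H →ₗ[K] H))
      (LinearMap.id : H ⊗[K] H →ₗ[K] H ⊗[K] H)
      (TensorProduct.tensorTensorTensorComm K H H H H (HB.comul h ⊗ₜ[K] HB.comul g)))

/-- The `m`-Hom-smash product multiplication on simple tensors:
`(a ♯ h)(b ♯ g) = a(α^m(h₁)·β⁻¹(b)) ♯ α(h₂)g`. -/
def smashMulElem (HB : HomBialgebraStr K H) (AA : HomAlgebraStr K A)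
    (act : H →ₗ[K] A →ₗ[K] A) (m : ℤ) (a : A) (h : H) (b : A) (g : H) : A ⊗[K] H :=
  TensorProduct.map
    ((AA.mul a) ∘ₗ (act.flip ((AA.str ^ (-1 : ℤ)) b)) ∘ₗ (HB.str ^ m).toLinearMap)
    ((HB.mul.flip g) ∘ₗ HB.str.toLinearMap)
    (HB.comul h)

/-- The `m`-Hom-smash coproduct comultiplication on simple tensors:
`Δ(a ⋊ h) = (a₁ ⋊ α^m(a₂₍₋₁₎)α⁻¹(h₁)) ⊗ (β(a₂₍₀₎) ⋊ h₂)`. -/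
def scComulElem (HB : HomBialgebraStr K H) (AC : HomCoalgebraStr K A)
    (coact : A →ₗ[K] H ⊗[K] A) (m : ℤ) (a : A) (h : H) :
    (A ⊗[K] H) ⊗[K] (A ⊗[K] H) :=
  TensorProduct.map
    (TensorProduct.map (LinearMap.id : A →ₗ[K] A)
        (TensorProduct.lift HB.mul ∘ₗ
          TensorProduct.map (HB.str ^ m).toLinearMap (HB.str ^ (-1 : ℤ)).toLinearMap) ∘ₗ
      (TensorProduct.assoc K A H H).toLinearMap)
    (TensorProduct.map AC.str.toLinearMap (LinearMap.id : H →ₗ[K] H))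
    (TensorProduct.tensorTensorTensorComm K (A ⊗[K] H) A H H
      ((TensorProduct.assoc K A H A).symm
          (TensorProduct.map (LinearMap.id : A →ₗ[K] A) coact (AC.comul a)) ⊗ₜ[K] HB.comul h))

/-- Condition (1) of Theorem 2.3. -/
def CPCond1 (HB : HomBialgebraStr K H) (AA : HomAlgebraStr K A)
    (σ : H →ₗ[K] H →ₗ[K] A) : Prop :=
  (∀ h : H, σ h HB.one = HB.counit h • AA.one) ∧
  (∀ h : H, σ HB.one h = HB.counit h • AA.one) ∧
  (∀ h g : H, σ (HB.str h) (HB.str g) = AA.str (σ h g))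

/-- Condition (2) of Theorem 2.3:
`[α^m(h₁l₁)·a] σ(α^{k+2}(h₂), α^{k+2}(l₂)) = σ(α^{k+2}(h₁), α^{k+2}(l₁)) [α^m(h₂l₂)·a]`. -/
def CPCond2 (HB : HomBialgebraStr K H) (AA : HomAlgebraStr K A)
    (act : H →ₗ[K] A →ₗ[K] A) (σ : H →ₗ[K] H →ₗ[K] A) (m k : ℤ) : Prop :=
  ∀ (h l : H) (a : A),
    TensorProduct.lift AA.mul
      (TensorProduct.map
        ((act.flip a) ∘ₗ (HB.str ^ m).toLinearMap ∘ₗ TensorProduct.lift HB.mul)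
        (TensorProduct.lift σ ∘ₗ
          TensorProduct.map (HB.str ^ (k+2)).toLinearMap (HB.str ^ (k+2)).toLinearMap)
        (TensorProduct.tensorTensorTensorComm K H H H H (HB.comul h ⊗ₜ[K] HB.comul l)))
    =
    TensorProduct.lift AA.mul
      (TensorProduct.map
        (TensorProduct.lift σ ∘ₗ
          TensorProduct.map (HB.str ^ (k+2)).toLinearMap (HB.str ^ (k+2)).toLinearMap)
        ((act.flip a) ∘ₗ (HB.str ^ m).toLinearMap ∘ₗ TensorProduct.lift HB.mul)
        (TensorProduct.tensorTensorTensorComm K H H H H (HB.comul h ⊗ₜ[K] HB.comul l)))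

/-- Condition (3) of Theorem 2.3:
`[α^{m+1}(h₁)·σ(α^{k+1}(l₁), α^{k+1}(g₁))] σ(α^{k+2}(h₂), α^{k+1}(l₂g₂))
  = σ(α^{k+2}(h₁), α^{k+2}(l₁)) σ(α^{k+1}(h₂l₂), α^{k+1}(g))`. -/
def CPCond3 (HB : HomBialgebraStr K H) (AA : HomAlgebraStr K A)
    (act : H →ₗ[K] A →ₗ[K] A) (σ : H →ₗ[K] H →ₗ[K] A) (m k : ℤ) : Prop :=
  ∀ h l g : H,
    TensorProduct.lift AA.mul
      (TensorProduct.map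
        (TensorProduct.lift act ∘ₗ
          TensorProduct.map (HB.str ^ (m+1)).toLinearMap
            (TensorProduct.lift σ ∘ₗ
              TensorProduct.map (HB.str ^ (k+1)).toLinearMap (HB.str ^ (k+1)).toLinearMap))
        (TensorProduct.lift σ ∘ₗ
          TensorProduct.map (HB.str ^ (k+2)).toLinearMap
            ((HB.str ^ (k+1)).toLinearMap ∘ₗ TensorProduct.lift HB.mul))
        (TensorProduct.tensorTensorTensorComm K H H (H ⊗[K] H) (H ⊗[K] H)
          (HB.comul h ⊗ₜ[K]
            (TensorProduct.tensorTensorTensorComm K H H H H (HB.comul l ⊗ₜ[K] HB.comul g)))))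
    =
    TensorProduct.lift AA.mul
      (TensorProduct.map
        (TensorProduct.lift σ ∘ₗ
          TensorProduct.map (HB.str ^ (k+2)).toLinearMap (HB.str ^ (k+2)).toLinearMap)
        ((σ.flip ((HB.str ^ (k+1)) g)) ∘ₗ (HB.str ^ (k+1)).toLinearMap ∘ₗ TensorProduct.lift HB.mul)
        (TensorProduct.tensorTensorTensorComm K H H H H (HB.comul h ⊗ₜ[K] HB.comul l)))

/-- `σ` is a twisted comodule cocycle:
`β(a₁) ⊗ α^{m+1}(a₂₍₋₁₎)g ⊗ a₂₍₀₎
  = a₁σ(α^{k+m+2}(a₂₍₋₁₎₁), α^{k+1}(g₁)) ⊗ α^{m+2}(a₂₍₋₁₎₂)α(g₂) ⊗ a₂₍₀₎`. -/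
def IsTwistedCocycle (HB : HomBialgebraStr K H) (AA : HomAlgebraStr K A)
    (AC : HomCoalgebraStr K A) (coact : A →ₗ[K] H ⊗[K] A)
    (σ : H →ₗ[K] H →ₗ[K] A) (m k : ℤ) : Prop :=
  ∀ (a : A) (g : H),
    (TensorProduct.assoc K A H A).symm
      (TensorProduct.map AA.str.toLinearMap
        (TensorProduct.map ((HB.mul.flip g) ∘ₗ (HB.str ^ (m+1)).toLinearMap)
          (LinearMap.id : A →ₗ[K] A))
        (TensorProduct.map (LinearMap.id : A →ₗ[K] A) coact (AC.comul a)))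
    =
    TensorProduct.map
      (TensorProduct.map (TensorProduct.lift AA.mul) (LinearMap.id : H →ₗ[K] H)
        ∘ₗ (TensorProduct.assoc K A A H).symm.toLinearMap
        ∘ₗ TensorProduct.map (LinearMap.id : A →ₗ[K] A)
            (TensorProduct.map
              (TensorProduct.lift σ ∘ₗ
                TensorProduct.map (HB.str ^ (k+m+2)).toLinearMap (HB.str ^ (k+1)).toLinearMap)
              (TensorProduct.lift HB.mul ∘ₗ
                TensorProduct.map (HB.str ^ (m+2)).toLinearMap HB.str.toLinearMap)
            ∘ₗ (TensorProduct.tensorTensorTensorComm K H H H H).toLinearMap)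
        ∘ₗ (TensorProduct.assoc K A (H ⊗[K] H) (H ⊗[K] H)).toLinearMap)
      (LinearMap.id : A →ₗ[K] A)
      ((TensorProduct.assoc K (A ⊗[K] (H ⊗[K] H)) (H ⊗[K] H) A).symm
        (TensorProduct.map (LinearMap.id : A ⊗[K] (H ⊗[K] H) →ₗ[K] A ⊗[K] (H ⊗[K] H))
          (TensorProduct.comm K A (H ⊗[K] H)).toLinearMap
          (TensorProduct.assoc K (A ⊗[K] (H ⊗[K] H)) A (H ⊗[K] H)
            ((TensorProduct.assoc K A (H ⊗[K] H) A).symm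
                (TensorProduct.map (LinearMap.id : A →ₗ[K] A)
                  (TensorProduct.map HB.comul (LinearMap.id : A →ₗ[K] A))
                  (TensorProduct.map (LinearMap.id : A →ₗ[K] A) coact (AC.comul a)))
              ⊗ₜ[K] HB.comul g))))

/-- Auxiliary map `(n ⊗ w) ⊗ t ↦ (α^j(n)·t) ⊗ f(w)` on `(H ⊗ M) ⊗ H`. -/
def coactMulAux (HB : HomBialgebraStr K H) (j : ℤ) (f : M →ₗ[K] M) :
    (H ⊗[K] M) ⊗[K] H →ₗ[K] H ⊗[K] M :=
  TensorProduct.map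
      (TensorProduct.lift HB.mul ∘ₗ
        TensorProduct.map (HB.str ^ j).toLinearMap (LinearMap.id : H →ₗ[K] H)) f
    ∘ₗ (TensorProduct.assoc K H H M).symm.toLinearMap
    ∘ₗ TensorProduct.map (LinearMap.id : H →ₗ[K] H) (TensorProduct.comm K M H).toLinearMap
    ∘ₗ (TensorProduct.assoc K H M H).toLinearMap

/-- (A1): `ε_A` is an algebra map. -/
def CondA1 (AA : HomAlgebraStr K A) (AC : HomCoalgebraStr K A) : Prop :=
  (∀ a b : A, AC.counit (AA.mul a b) = AC.counit a * AC.counit b) ∧ AC.counit AA.one = 1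

/-- (A2): `ε_A(h·a) = ε_H(h)ε_A(a)`. -/
def CondA2 (HB : HomBialgebraStr K H) (AC : HomCoalgebraStr K A)
    (act : H →ₗ[K] A →ₗ[K] A) : Prop :=
  ∀ (h : H) (a : A), AC.counit (act h a) = HB.counit h * AC.counit a

/-- (A3): `σ` is a coalgebra map. -/
def CondA3 (HB : HomBialgebraStr K H) (AC : HomCoalgebraStr K A)
    (σ : H →ₗ[K] H →ₗ[K] A) : Prop :=
  (∀ h g : H,
    AC.comul (σ h g)
      = TensorProduct.map (TensorProduct.lift σ) (TensorProduct.lift σ)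
          (TensorProduct.tensorTensorTensorComm K H H H H (HB.comul h ⊗ₜ[K] HB.comul g))) ∧
  (∀ h g : H, AC.counit (σ h g) = HB.counit h * HB.counit g)

/-- (A4): `Δ_A(1_A) = 1_A ⊗ 1_A`. -/
def CondA4 (AA : HomAlgebraStr K A) (AC : HomCoalgebraStr K A) : Prop :=
  AC.comul AA.one = AA.one ⊗ₜ[K] AA.one

/-- (A5): the coaction is an algebra map. -/
def CondA5 (HB : HomBialgebraStr K H) (AA : HomAlgebraStr K A)
    (coact : A →ₗ[K] H ⊗[K] A) : Prop :=
  (∀ a b : A,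
    coact (AA.mul a b)
      = TensorProduct.map (TensorProduct.lift HB.mul) (TensorProduct.lift AA.mul)
          (TensorProduct.tensorTensorTensorComm K H A H A (coact a ⊗ₜ[K] coact b))) ∧
  coact AA.one = HB.one ⊗ₜ[K] AA.one

/-- (A6). -/
def CondA6 (HB : HomBialgebraStr K H) (coact : A →ₗ[K] H ⊗[K] A)
    (σ : H →ₗ[K] H →ₗ[K] A) (m k : ℤ) : Prop :=
  ∀ h g : H,
    coactMulAux HB (m-1) (LinearMap.id : A →ₗ[K] A)
      (TensorProduct.map
        (coact ∘ₗ TensorProduct.lift σ ∘ₗ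
          TensorProduct.map (HB.str ^ (k+2)).toLinearMap (HB.str ^ (k+2)).toLinearMap)
        ((HB.str ^ (-1 : ℤ)).toLinearMap ∘ₗ TensorProduct.lift HB.mul)
        (TensorProduct.tensorTensorTensorComm K H H H H (HB.comul h ⊗ₜ[K] HB.comul g)))
    =
    TensorProduct.map (TensorProduct.lift HB.mul)
      (TensorProduct.lift σ ∘ₗ
        TensorProduct.map (HB.str ^ (k+1)).toLinearMap (HB.str ^ (k+1)).toLinearMap)
      (TensorProduct.tensorTensorTensorComm K H H H H (HB.comul h ⊗ₜ[K] HB.comul g))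

/-- (A7). -/
def CondA7 (HB : HomBialgebraStr K H) (AA : HomAlgebraStr K A) (AC : HomCoalgebraStr K A)
    (act : H →ₗ[K] A →ₗ[K] A) (coact : A →ₗ[K] H ⊗[K] A)
    (σ : H →ₗ[K] H →ₗ[K] A) (m k : ℤ) : Prop :=
  ∀ a b : A,
    AC.comul (AA.mul a b) =
      TensorProduct.map
        (TensorProduct.lift AA.mul
          ∘ₗ TensorProduct.map (LinearMap.id : A →ₗ[K] A)
              (TensorProduct.lift AA.mul
                ∘ₗ TensorProduct.map
                    (TensorProduct.lift act ∘ₗ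
                      TensorProduct.map (HB.str ^ (2*m)).toLinearMap (AA.str ^ (-2 : ℤ)).toLinearMap)
                    (TensorProduct.lift σ ∘ₗ
                      TensorProduct.map (HB.str ^ (k+m+1)).toLinearMap (HB.str ^ (k+m)).toLinearMap)
                ∘ₗ (TensorProduct.tensorTensorTensorComm K H H A H).toLinearMap)
          ∘ₗ (TensorProduct.assoc K A (H ⊗[K] H) (A ⊗[K] H)).toLinearMap)
        (AA.str.toLinearMap ∘ₗ TensorProduct.lift AA.mul)
        (TensorProduct.tensorTensorTensorComm K (A ⊗[K] (H ⊗[K] H)) A (A ⊗[K] H) A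
          ((TensorProduct.assoc K A (H ⊗[K] H) A).symm
              (TensorProduct.map (LinearMap.id : A →ₗ[K] A)
                (TensorProduct.map HB.comul (LinearMap.id : A →ₗ[K] A))
                (TensorProduct.map (LinearMap.id : A →ₗ[K] A) coact (AC.comul a)))
            ⊗ₜ[K]
            (TensorProduct.assoc K A H A).symm
              (TensorProduct.map (LinearMap.id : A →ₗ[K] A) coact (AC.comul b))))

/-- (A8). -/
def CondA8 (HB : HomBialgebraStr K H) (AA : HomAlgebraStr K A) (AC : HomCoalgebraStr K A)
    (act : H →ₗ[K] A →ₗ[K] A) (coact : A →ₗ[K] H ⊗[K] A)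
    (σ : H →ₗ[K] H →ₗ[K] A) (m k : ℤ) : Prop :=
  ∀ (h : H) (b : A),
    AC.comul (act ((HB.str ^ m) h) b) =
      TensorProduct.map
        (TensorProduct.lift AA.mul
          ∘ₗ TensorProduct.map
              (TensorProduct.lift act ∘ₗ
                TensorProduct.map (HB.str ^ m).toLinearMap (AA.str ^ (-1 : ℤ)).toLinearMap)
              (TensorProduct.lift σ ∘ₗ
                TensorProduct.map (HB.str ^ (k+1)).toLinearMap (HB.str ^ (k+m+1)).toLinearMap)
          ∘ₗ (TensorProduct.tensorTensorTensorComm K H H A H).toLinearMap)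
        (TensorProduct.lift act ∘ₗ
          TensorProduct.map (HB.str ^ m).toLinearMap AA.str.toLinearMap)
        (TensorProduct.tensorTensorTensorComm K (H ⊗[K] H) H (A ⊗[K] H) A
          (TensorProduct.map HB.comul (LinearMap.id : H →ₗ[K] H) (HB.comul h)
            ⊗ₜ[K]
            (TensorProduct.assoc K A H A).symm
              (TensorProduct.map (LinearMap.id : A →ₗ[K] A) coact (AC.comul b))))

/-- (A9). -/
def CondA9 (HB : HomBialgebraStr K H) (act : H →ₗ[K] A →ₗ[K] A)
    (coact : A →ₗ[K] H ⊗[K] A) (m : ℤ) : Prop :=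
  ∀ (h : H) (b : A),
    coactMulAux HB (m-1) (LinearMap.id : A →ₗ[K] A)
      (TensorProduct.map (coact ∘ₗ (act.flip b) ∘ₗ (HB.str ^ (m+1)).toLinearMap)
        (LinearMap.id : H →ₗ[K] H) (HB.comul h))
    =
    TensorProduct.map
      (TensorProduct.lift HB.mul ∘ₗ
        TensorProduct.map (LinearMap.id : H →ₗ[K] H) (HB.str ^ m).toLinearMap)
      (TensorProduct.lift act ∘ₗ
        TensorProduct.map (HB.str ^ m).toLinearMap (LinearMap.id : A →ₗ[K] A))
      (TensorProduct.tensorTensorTensorComm K H H H A (HB.comul h ⊗ₜ[K] coact b))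

/-- The Radford `[(m,k),m]`-biproduct structure on `A ⊗ H`. -/
structure IsRadfordBiproduct (HB : HomBialgebraStr K H) (AA : HomAlgebraStr K A)
    (AC : HomCoalgebraStr K A) (act : H →ₗ[K] A →ₗ[K] A) (coact : A →ₗ[K] H ⊗[K] A)
    (σ : H →ₗ[K] H →ₗ[K] A) (m k : ℤ) (B : HomBialgebraStr K (A ⊗[K] H)) : Prop where
  mul_def : ∀ (a : A) (h : H) (b : A) (g : H),
    B.mul (a ⊗ₜ[K] h) (b ⊗ₜ[K] g) = cpMulElem HB AA act σ m k a h b g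
  one_def : B.one = AA.one ⊗ₜ[K] HB.one
  comul_def : ∀ (a : A) (h : H), B.comul (a ⊗ₜ[K] h) = scComulElem HB AC coact m a h
  counit_def : ∀ (a : A) (h : H), B.counit (a ⊗ₜ[K] h) = AC.counit a * HB.counit h
  str_def : B.str = TensorProduct.congr AA.str HB.str

/-- `S_H` is a `σ`-antipode for `(H, α)`. -/
structure IsSigmaAntipode (HB : HomBialgebraStr K H) (AA : HomAlgebraStr K A)
    (σ : H →ₗ[K] H →ₗ[K] A) (S : H →ₗ[K] H) : Prop where
  antipode_str : ∀ h : H, S (HB.str h) = HB.str (S h)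
  right : ∀ h : H,
    TensorProduct.map (TensorProduct.lift σ) (TensorProduct.lift HB.mul)
        (TensorProduct.tensorTensorTensorComm K H H H H
          (TensorProduct.map HB.comul (HB.comul ∘ₗ S) (HB.comul h)))
      = HB.counit h • (AA.one ⊗ₜ[K] HB.one)
  left : ∀ h : H,
    TensorProduct.map (TensorProduct.lift σ) (TensorProduct.lift HB.mul)
        (TensorProduct.tensorTensorTensorComm K H H H H
          (TensorProduct.map (HB.comul ∘ₗ S) HB.comul (HB.comul h)))
      = HB.counit h • (AA.one ⊗ₜ[K] HB.one)

/-- `S_A` is a convolution inverse of `id_A`. -/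
def IsConvInvOfId (AA : HomAlgebraStr K A) (AC : HomCoalgebraStr K A)
    (SA : A →ₗ[K] A) : Prop :=
  (∀ a : A, TensorProduct.lift (AA.mul ∘ₗ SA) (AC.comul a) = AC.counit a • AA.one) ∧
  (∀ a : A, TensorProduct.lift (AA.mul.compl₂ SA) (AC.comul a) = AC.counit a • AA.one)

/-- `σ` and `σinv` are convolution inverses of each other. -/
def IsConvInvPair (HB : HomBialgebraStr K H) (AA : HomAlgebraStr K A)
    (σ σinv : H →ₗ[K] H →ₗ[K] A) : Prop :=
  (∀ h g : H,
    TensorProduct.lift AA.mul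
      (TensorProduct.map (TensorProduct.lift σ) (TensorProduct.lift σinv)
        (TensorProduct.tensorTensorTensorComm K H H H H (HB.comul h ⊗ₜ[K] HB.comul g)))
    = (HB.counit h * HB.counit g) • AA.one) ∧
  (∀ h g : H,
    TensorProduct.lift AA.mul
      (TensorProduct.map (TensorProduct.lift σinv) (TensorProduct.lift σ)
        (TensorProduct.tensorTensorTensorComm K H H H H (HB.comul h ⊗ₜ[K] HB.comul g)))
    = (HB.counit h * HB.counit g) • AA.one)

/-- The Radford antipode formula
`S(a ⊗ h) = (1_A ⊗ S_H(α^{m−1}(a₍₋₁₎)α⁻²(h)))·(S_A(a₍₀₎) ⊗ 1_H)`. -/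
def radfordAntipodeElem (HB : HomBialgebraStr K H) (AA : HomAlgebraStr K A)
    (coact : A →ₗ[K] H ⊗[K] A)
    (Bmul : (A ⊗[K] H) →ₗ[K] (A ⊗[K] H) →ₗ[K] (A ⊗[K] H))
    (SH : H →ₗ[K] H) (SA : A →ₗ[K] A) (m : ℤ) (a : A) (h : H) : A ⊗[K] H :=
  TensorProduct.lift Bmul
    (TensorProduct.map
      ((TensorProduct.mk K A H AA.one) ∘ₗ SH ∘ₗ (HB.mul.flip ((HB.str ^ (-2 : ℤ)) h)) ∘ₗ
        (HB.str ^ (m - 1)).toLinearMap)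
      (((TensorProduct.mk K A H).flip HB.one) ∘ₗ SA)
      (coact a))

/-- `φ^l(l ⊗ (a ⊗ h)) = (α(l₁₁)·β⁻¹(a)) σ(α^{k+2−m}(l₁₂), α^{k+1}(h₁)) ⊗ α^{1−m}(l₂)α(h₂)`. -/
def philElem (HB : HomBialgebraStr K H) (AA : HomAlgebraStr K A)
    (act : H →ₗ[K] A →ₗ[K] A) (σ : H →ₗ[K] H →ₗ[K] A) (m k : ℤ)
    (l : H) (a : A) (h : H) : A ⊗[K] H :=
  TensorProduct.map
    (TensorProduct.lift AA.mul ∘ₗ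
      TensorProduct.map ((act.flip ((AA.str ^ (-1 : ℤ)) a)) ∘ₗ HB.str.toLinearMap)
        (TensorProduct.lift σ ∘ₗ
          TensorProduct.map (HB.str ^ (k+2-m)).toLinearMap (HB.str ^ (k+1)).toLinearMap) ∘ₗ
      (TensorProduct.assoc K H H H).toLinearMap)
    (TensorProduct.lift HB.mul ∘ₗ
      TensorProduct.map (HB.str ^ (1-m)).toLinearMap HB.str.toLinearMap)
    (TensorProduct.map (TensorProduct.map HB.comul (LinearMap.id : H →ₗ[K] H))
      (LinearMap.id : H ⊗[K] H →ₗ[K] H ⊗[K] H)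
      (TensorProduct.tensorTensorTensorComm K H H H H (HB.comul l ⊗ₜ[K] HB.comul h)))

/-- `φ^r((a ⊗ h) ⊗ l) = a σ(α^{k+1}(h₁), α^{k+1−m}(l₁)) ⊗ α(h₂)α^{1−m}(l₂)`. -/
def phirElem (HB : HomBialgebraStr K H) (AA : HomAlgebraStr K A)
    (σ : H →ₗ[K] H →ₗ[K] A) (m k : ℤ) (a : A) (h : H) (l : H) : A ⊗[K] H :=
  TensorProduct.map
    ((AA.mul a) ∘ₗ TensorProduct.lift σ ∘ₗ
      TensorProduct.map (HB.str ^ (k+1)).toLinearMap (HB.str ^ (k+1-m)).toLinearMap)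
    (TensorProduct.lift HB.mul ∘ₗ
      TensorProduct.map HB.str.toLinearMap (HB.str ^ (1-m)).toLinearMap)
    (TensorProduct.tensorTensorTensorComm K H H H H (HB.comul h ⊗ₜ[K] HB.comul l))

/-- `(M, μ, φ)` is a left `(H, α, σ̄)`-Hom module. -/
def IsLeftSigmaHomModule (HB : HomBialgebraStr K H)
    (mulM : M →ₗ[K] M →ₗ[K] M) (strM : M →ₗ[K] M)
    (σbar : H →ₗ[K] H →ₗ[K] M) (φ : H →ₗ[K] M →ₗ[K] M) : Prop :=
  (∀ (g l : H) (x : M),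
    φ (HB.str g) (φ l x)
      = TensorProduct.lift mulM
          (TensorProduct.map (strM ∘ₗ TensorProduct.lift σbar)
            ((φ.flip x) ∘ₗ TensorProduct.lift HB.mul)
            (TensorProduct.tensorTensorTensorComm K H H H H (HB.comul g ⊗ₜ[K] HB.comul l))))
  ∧ (∀ x : M, φ HB.one x = strM x)

/-- `(M, μ, φ)` is a right `(H, α, σ̄)`-Hom module. -/
def IsRightSigmaHomModule (HB : HomBialgebraStr K H)
    (mulM : M →ₗ[K] M →ₗ[K] M) (strM : M →ₗ[K] M)
    (σbar : H →ₗ[K] H →ₗ[K] M) (φ : M →ₗ[K] H →ₗ[K] M) : Prop :=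
  (∀ (x : M) (l g : H),
    φ (φ x l) (HB.str g)
      = mulM (strM x)
          (TensorProduct.lift φ
            (TensorProduct.map (TensorProduct.lift σbar) (TensorProduct.lift HB.mul)
              (TensorProduct.tensorTensorTensorComm K H H H H (HB.comul l ⊗ₜ[K] HB.comul g)))))
  ∧ (∀ x : M, φ x HB.one = strM x)

/-- `(M, μ, φ⁺, φ⁻)` is a weak `(H, α)` Hom-bimodule. -/
def IsWeakHomBimodule (HB : HomBialgebraStr K H) (strM : M →ₗ[K] M)
    (φl : H →ₗ[K] M →ₗ[K] M) (φr : M →ₗ[K] H →ₗ[K] M) : Prop :=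
  (∀ x : M, φl HB.one x = strM x) ∧ (∀ x : M, φr x HB.one = strM x) ∧
  (∀ (h : H) (x : M) (g : H), φl (HB.str h) (φr x g) = φr (φl h x) (HB.str g))

/-- A weak `m`-Hom admissible mapping system `C ⇄ A ⇄ H`. -/
structure WeakAdmissibleSystem (HB : HomBialgebraStr K H)
    (CA : HomAlgebraStr K C) (CC : HomCoalgebraStr K C)
    (coact : C →ₗ[K] H ⊗[K] C) (m : ℤ) (AB : HomBialgebraStr K A)
    (j : C →ₗ[K] A) (p : A →ₗ[K] C) (i : H →ₗ[K] A) (π : A →ₗ[K] H) : Prop where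
  c_str_eq : CA.str = CC.str
  p_j : ∀ c : C, p (j c) = c
  pi_i : ∀ h : H, π (i h) = h
  pi_mul : ∀ a b : A, π (AB.mul a b) = HB.mul (π a) (π b)
  pi_one : π AB.one = HB.one
  pi_str : ∀ a : A, π (AB.str a) = HB.str (π a)
  pi_comul : ∀ a : A, TensorProduct.map π π (AB.comul a) = HB.comul (π a)
  pi_counit : ∀ a : A, HB.counit (π a) = AB.counit a
  i_one : i HB.one = AB.one
  i_str : ∀ h : H, i (HB.str h) = AB.str (i h)
  i_comul : ∀ h : H, TensorProduct.map i i (HB.comul h) = AB.comul (i h)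
  i_counit : ∀ h : H, AB.counit (i h) = HB.counit h
  p_str : ∀ a : A, p (AB.str a) = CC.str (p a)
  p_comul : ∀ a : A, TensorProduct.map p p (AB.comul a) = CC.comul (p a)
  p_counit : ∀ a : A, CC.counit (p a) = AB.counit a
  j_mul : ∀ c d : C, j (CA.mul c d) = AB.mul (j c) (j d)
  j_one : j CA.one = AB.one
  j_str : ∀ c : C, j (CC.str c) = AB.str (j c)
  p_left_act : ∀ (h : H) (a : A),
    p (AB.mul (i ((HB.str ^ (-m)) h)) a) = HB.counit h • CC.str (p a)
  p_right_act : ∀ (a : A) (h : H),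
    p (AB.mul a (i ((HB.str ^ (-m)) h))) = HB.counit h • CC.str (p a)
  sigma_mod : ∃ σbar : H →ₗ[K] H →ₗ[K] A,
    IsLeftSigmaHomModule HB AB.mul AB.str.toLinearMap σbar
        (AB.mul ∘ₗ i ∘ₗ (HB.str ^ (-m)).toLinearMap)
      ∧ IsRightSigmaHomModule HB AB.mul AB.str.toLinearMap σbar
        (AB.mul.compl₂ (i ∘ₗ (HB.str ^ (-m)).toLinearMap))
  sub_l : ∀ c : C, ∃ y : H ⊗[K] C,
    TensorProduct.map ((HB.str ^ (-m)).toLinearMap ∘ₗ π) (LinearMap.id : A →ₗ[K] A)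
        (AB.comul (j c))
      = TensorProduct.map (LinearMap.id : H →ₗ[K] H) j y
  sub_r : ∀ c : C, ∃ z : C ⊗[K] H,
    TensorProduct.map (LinearMap.id : A →ₗ[K] A) ((HB.str ^ (-m)).toLinearMap ∘ₗ π)
        (AB.comul (j c))
      = TensorProduct.map j (LinearMap.id : H →ₗ[K] H) z
  p_col : ∀ c : C,
    TensorProduct.map (LinearMap.id : H →ₗ[K] H) p
        (TensorProduct.map ((HB.str ^ (-m)).toLinearMap ∘ₗ π) (LinearMap.id : A →ₗ[K] A)
          (AB.comul (j c)))
      = coact c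
  p_cor : ∀ c : C,
    TensorProduct.map p (LinearMap.id : H →ₗ[K] H)
        (TensorProduct.map (LinearMap.id : A →ₗ[K] A) ((HB.str ^ (-m)).toLinearMap ∘ₗ π)
          (AB.comul (j c)))
      = CC.str.symm c ⊗ₜ[K] HB.one
  split : ∀ a : A,
    TensorProduct.lift AB.mul (TensorProduct.map (j ∘ₗ p) (i ∘ₗ π) (AB.comul a)) = a

/-- The map `f : C ♯ H → A`, `c ⊗ h ↦ γ⁻¹(j(c)i(h))`. -/
def admF (AB : HomBialgebraStr K A) (j : C →ₗ[K] A) (i : H →ₗ[K] A) :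
    C ⊗[K] H →ₗ[K] A :=
  AB.str.symm.toLinearMap ∘ₗ TensorProduct.lift ((AB.mul ∘ₗ j).compl₂ i)

/-- The map `g : A → C ♯ H`, `a ↦ β(p(a₁)) ⊗ α(π(a₂))`. -/
def admG (HB : HomBialgebraStr K H) (CC : HomCoalgebraStr K C)
    (AB : HomBialgebraStr K A) (p : A →ₗ[K] C) (π : A →ₗ[K] H) :
    A →ₗ[K] C ⊗[K] H :=
  TensorProduct.map (CC.str.toLinearMap ∘ₗ p) (HB.str.toLinearMap ∘ₗ π) ∘ₗ AB.comul

end Defs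
section AuxZ

variable {K : Type*} [Field K] {H A M N : Type*} [AddCommGroup H] [Module K H]
  [AddCommGroup A] [Module K A] [AddCommGroup M] [Module K M] [AddCommGroup N] [Module K N]

lemma mapMap {P Q R S : Type*} [AddCommGroup P] [Module K P] [AddCommGroup Q] [Module K Q]
    [AddCommGroup R] [Module K R] [AddCommGroup S] [Module K S]
    (f₂ : P →ₗ[K] R) (g₂ : Q →ₗ[K] S) (f₁ : M →ₗ[K] P) (g₁ : N →ₗ[K] Q)
    (x : M ⊗[K] N) :
    TensorProduct.map f₂ g₂ (TensorProduct.map f₁ g₁ x)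
      = TensorProduct.map (f₂ ∘ₗ f₁) (g₂ ∘ₗ g₁) x := by
  rw [TensorProduct.map_comp]; rfl

lemma zpowZpow (e : H ≃ₗ[K] H) (a b : ℤ) (x : H) :
    (e ^ a) ((e ^ b) x) = (e ^ (a + b)) x := by
  rw [zpow_add]; rfl

lemma zpowSucc (e : H ≃ₗ[K] H) (n : ℤ) (x : H) : (e ^ (n + 1)) x = (e ^ n) (e x) := by
  rw [zpow_add_one]; rfl

lemma zpowPred (e : H ≃ₗ[K] H) (n : ℤ) (x : H) : (e ^ (n + -1)) x = (e ^ n) (e.symm x) := by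
  rw [← zpowZpow, zpow_neg_one]; rfl

lemma zpowFix (e : H ≃ₗ[K] H) (x : H) (hx : e x = x) (n : ℤ) : (e ^ n) x = x := by
  have hs : e.symm x = x := by conv_lhs => rw [← hx, e.symm_apply_apply]
  induction n using Int.induction_on with
  | zero => rfl
  | succ n ih => rw [zpowSucc, hx, ih]
  | pred n ih => rw [show (-(n:ℤ) - 1) = (-n) + -1 by ring, zpowPred, hs, ih]

lemma zpowConj (e : H ≃ₗ[K] H) (g : M ≃ₗ[K] M) (f : H →ₗ[K] M)
    (hc : ∀ x, f (e x) = g (f x)) (n : ℤ) (x : H) : f ((e ^ n) x) = (g ^ n) (f x) := by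
  have hs : ∀ x, f (e.symm x) = g.symm (f x) := fun y => by
    apply g.injective; rw [← hc, e.apply_symm_apply, g.apply_symm_apply]
  induction n using Int.induction_on generalizing x with
  | zero => rfl
  | succ n ih => rw [zpowSucc, zpowSucc, ih, hc]
  | pred n ih => rw [show (-(n:ℤ) - 1) = (-n) + -1 by ring, zpowPred, zpowPred, ih, hs]

lemma congrZpow (e : A ≃ₗ[K] A) (f : H ≃ₗ[K] H) (n : ℤ) (x : A ⊗[K] H) :
    ((TensorProduct.congr e f) ^ n) x
      = TensorProduct.map (e ^ n).toLinearMap (f ^ n).toLinearMap x := by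
  induction n using Int.induction_on generalizing x with
  | zero => simp
  | succ n ih =>
      rw [zpowSucc, ih, show (TensorProduct.congr e f) x
          = TensorProduct.map e.toLinearMap f.toLinearMap x from rfl, mapMap]
      have h1 : ((e ^ ((n:ℤ) + 1)).toLinearMap : A →ₗ[K] A)
          = (e ^ (n:ℤ)).toLinearMap ∘ₗ e.toLinearMap := by
        rw [zpow_add_one]; rfl
      have h2 : ((f ^ ((n:ℤ) + 1)).toLinearMap : H →ₗ[K] H)
          = (f ^ (n:ℤ)).toLinearMap ∘ₗ f.toLinearMap := by
        rw [zpow_add_one]; rfl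
      rw [h1, h2]
  | pred n ih =>
      rw [show (-(n:ℤ) - 1) = (-n) + -1 by ring, zpowPred, ih,
        show (TensorProduct.congr e f).symm x
          = TensorProduct.map e.symm.toLinearMap f.symm.toLinearMap x from rfl, mapMap]
      have h1 : ((e ^ ((-n:ℤ) + -1)).toLinearMap : A →ₗ[K] A)
          = (e ^ (-n:ℤ)).toLinearMap ∘ₗ e.symm.toLinearMap := by
        rw [zpow_add, zpow_neg_one]; rfl
      have h2 : ((f ^ ((-n:ℤ) + -1)).toLinearMap : H →ₗ[K] H)
          = (f ^ (-n:ℤ)).toLinearMap ∘ₗ f.symm.toLinearMap := by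
        rw [zpow_add, zpow_neg_one]; rfl
      rw [h1, h2]

end AuxZ

section AuxHB

variable {K : Type*} [Field K] {H A : Type*} [AddCommGroup H] [Module K H]
  [AddCommGroup A] [Module K A]
variable (HB : HomBialgebraStr K H) (AA : HomAlgebraStr K A)

lemma hbOneZpow (n : ℤ) : (HB.str ^ n) HB.one = HB.one := zpowFix _ _ HB.str_one n

lemma aaOneZpow (n : ℤ) : (AA.str ^ n) AA.one = AA.one := zpowFix _ _ AA.str_one n

lemma hbCounitZpow (n : ℤ) (h : H) : HB.counit ((HB.str ^ n) h) = HB.counit h := by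
  have := zpowConj HB.str (1 : K ≃ₗ[K] K) HB.counit (fun x => HB.counit_str x) n h
  rwa [one_zpow, show ∀ y : K, (1 : K ≃ₗ[K] K) y = y from fun _ => rfl] at this

lemma hbComulZpow (n : ℤ) (h : H) :
    HB.comul ((HB.str ^ n) h)
      = TensorProduct.map (HB.str ^ n).toLinearMap (HB.str ^ n).toLinearMap (HB.comul h) := by
  have hc : ∀ x, HB.comul (HB.str x) = (TensorProduct.congr HB.str HB.str) (HB.comul x) :=
    fun x => HB.comul_str x
  rw [zpowConj HB.str (TensorProduct.congr HB.str HB.str) HB.comul hc n h, congrZpow]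

end AuxHB
section MainAux

variable {K H A : Type*} [Field K] [AddCommGroup H] [Module K H] [AddCommGroup A] [Module K A]
variable (HB : HomBialgebraStr K H) (AA : HomAlgebraStr K A)
variable (act : H →ₗ[K] A →ₗ[K] A) (σ : H →ₗ[K] H →ₗ[K] A) (m k : ℤ)

lemma cpOneOneOne (hact : IsWeakModuleAlgebra HB AA act) (h : H) :
    cpMulElem HB AA act σ m k AA.one h AA.one HB.one
      = TensorProduct.map
          (AA.str.toLinearMap ∘ₗ AA.str.toLinearMap ∘ₗ (σ.flip HB.one) ∘ₗ (HB.str ^ k).toLinearMap)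
          (HB.str.toLinearMap ∘ₗ HB.str.toLinearMap)
          (HB.comul h) := by
  unfold cpMulElem
  rw [HB.comul_one]
  generalize HB.comul h = t
  induction t using TensorProduct.induction_on with
  | zero => simp
  | add p q hp hq => simp only [add_tmul, map_add, hp, hq]
  | tmul x y =>
    simp only [TensorProduct.tensorTensorTensorComm_tmul, TensorProduct.map_tmul,
      LinearMap.id_apply, LinearMap.comp_apply, LinearEquiv.coe_coe, TensorProduct.lift.tmul,
      HB.mul_one]
    have hx : x = HB.str (TensorProduct.lid K H
        (TensorProduct.map HB.counit LinearMap.id (HB.comul x))) := by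
      rw [HB.counit_comul_left, HB.str.apply_symm_apply]
    conv_rhs => rw [hx]
    generalize HB.comul x = v
    induction v using TensorProduct.induction_on with
    | zero => simp
    | add p q hp hq => simp only [add_tmul, map_add, tmul_add, add_tmul, LinearMap.map_add,
        TensorProduct.add_tmul, hp, hq, LinearEquiv.map_add]
    | tmul u w =>
      simp only [TensorProduct.map_tmul, TensorProduct.assoc_tmul, TensorProduct.lift.tmul,
        LinearMap.comp_apply, LinearEquiv.coe_coe, LinearMap.flip_apply, LinearMap.id_apply,
        TensorProduct.lid_tmul, map_smul, LinearMap.smul_apply, aaOneZpow, hbOneZpow,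
        hact.act_one, hbCounitZpow, AA.one_mul, smul_tmul', zpowSucc]

end MainAux
section NormAux

variable {K H A : Type*} [Field K] [AddCommGroup H] [Module K H] [AddCommGroup A] [Module K A]
variable (HB : HomBialgebraStr K H) (AA : HomAlgebraStr K A) (AC : HomCoalgebraStr K A)
variable (act : H →ₗ[K] A →ₗ[K] A) (coact : A →ₗ[K] H ⊗[K] A)
variable (σ : H →ₗ[K] H →ₗ[K] A) (m k : ℤ)

lemma aaStrSymmOne : AA.str.symm AA.one = AA.one := by
  conv_lhs => rw [← AA.str_one, AA.str.symm_apply_apply]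

lemma sigmaOne (hact : IsWeakModuleAlgebra HB AA act)
    (B : HomBialgebraStr K (A ⊗[K] H))
    (hB : IsRadfordBiproduct HB AA AC act coact σ m k B) (x : H) :
    σ x HB.one = HB.counit x • AA.one := by
  set f := (AA.str.toLinearMap ∘ₗ AA.str.toLinearMap ∘ₗ (σ.flip HB.one) ∘ₗ (HB.str ^ k).toLinearMap) with hf
  set g := (HB.str.toLinearMap ∘ₗ HB.str.toLinearMap : H →ₗ[K] H) with hg
  have e1 : ∀ h : H, TensorProduct.map f g (HB.comul h) = AA.one ⊗ₜ[K] HB.str h := by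
    intro h
    have h1 := B.mul_one (AA.one ⊗ₜ[K] h)
    rw [hB.one_def, hB.mul_def, hB.str_def, cpOneOneOne HB AA act σ m k hact] at h1
    rw [h1, TensorProduct.congr_tmul, AA.str_one]
  have e2 : ∀ h : H,
      AA.str (AA.str (σ ((HB.str ^ k) (HB.str.symm h)) HB.one)) = HB.counit h • AA.one := by
    intro h
    have h2 := congrArg
      (fun z => TensorProduct.rid K A (TensorProduct.map LinearMap.id HB.counit z)) (e1 h)
    simp only [TensorProduct.map_tmul, TensorProduct.rid_tmul, LinearMap.id_apply,
      HB.counit_str] at h2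
    rw [← h2]
    conv_lhs => rw [← HB.counit_comul_right h]
    generalize HB.comul h = t
    induction t using TensorProduct.induction_on with
    | zero => simp
    | add p q hp hq => simp only [map_add, LinearMap.map_add, LinearEquiv.map_add,
        LinearMap.add_apply, hp, hq]
    | tmul u w =>
      simp only [TensorProduct.map_tmul, TensorProduct.rid_tmul, LinearMap.id_apply,
        LinearMap.comp_apply, LinearEquiv.coe_coe, LinearMap.flip_apply, map_smul,
        LinearMap.smul_apply, HB.counit_str, hg, hf]
  have e3 : AA.str (AA.str (σ x HB.one)) = HB.counit x • AA.one := by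
    have := e2 (HB.str ((HB.str ^ (-k)) x))
    rwa [HB.str.symm_apply_apply, zpowZpow, add_neg_cancel, zpow_zero,
      show ∀ y : H, (1 : H ≃ₗ[K] H) y = y from fun _ => rfl, HB.counit_str, hbCounitZpow] at this
  have := congrArg (fun z => AA.str.symm (AA.str.symm z)) e3
  simpa only [AA.str.symm_apply_apply, map_smul, aaStrSymmOne] using this

end NormAux
section NormAux2

variable {K H A : Type*} [Field K] [AddCommGroup H] [Module K H] [AddCommGroup A] [Module K A]
variable (HB : HomBialgebraStr K H) (AA : HomAlgebraStr K A) (AC : HomCoalgebraStr K A)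
variable (act : H →ₗ[K] A →ₗ[K] A) (coact : A →ₗ[K] H ⊗[K] A)
variable (σ : H →ₗ[K] H →ₗ[K] A) (m k : ℤ)

lemma strZpowStr (e : H ≃ₗ[K] H) (x : H) : e ((e ^ (-k)) x) = (e ^ (1 + -k)) x := by
  have h1 : e ((e ^ (-k)) x) = (e ^ (1:ℤ)) ((e ^ (-k)) x) := by rw [zpow_one]
  rw [h1, zpowZpow]

lemma strSymmZpow (e : H ≃ₗ[K] H) (n : ℤ) (x : H) :
    e.symm ((e ^ n) x) = (e ^ (-1 + n)) x := by
  rw [zpow_add, zpow_neg_one]; rfl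

lemma strApplyZpow (e : H ≃ₗ[K] H) (n : ℤ) (x : H) :
    e ((e ^ n) x) = (e ^ (n + 1)) x := by
  have h1 : e ((e ^ n) x) = (e ^ (1:ℤ)) ((e ^ n) x) := by rw [zpow_one]
  rw [h1, zpowZpow, add_comm]

lemma cpOneOne (hact : IsWeakModuleAlgebra HB AA act) (h g : H) :
    cpMulElem HB AA act σ m k AA.one h AA.one g
      = TensorProduct.map
          (AA.str.toLinearMap ∘ₗ AA.str.toLinearMap ∘ₗ TensorProduct.lift σ ∘ₗ
            TensorProduct.map (HB.str ^ k).toLinearMap (HB.str ^ k).toLinearMap)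
          (HB.str.toLinearMap ∘ₗ TensorProduct.lift HB.mul)
          (TensorProduct.tensorTensorTensorComm K H H H H (HB.comul h ⊗ₜ[K] HB.comul g)) := by
  unfold cpMulElem
  generalize HB.comul h = t
  generalize HB.comul g = u
  induction t using TensorProduct.induction_on with
  | zero => simp
  | add p q hp hq => simp only [add_tmul, map_add, hp, hq]
  | tmul x y =>
    induction u using TensorProduct.induction_on with
    | zero => simp
    | add p q hp hq => simp only [tmul_add, map_add, hp, hq]
    | tmul z w =>
      simp only [TensorProduct.tensorTensorTensorComm_tmul, TensorProduct.map_tmul,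
        LinearMap.id_apply, LinearMap.comp_apply, LinearEquiv.coe_coe, TensorProduct.lift.tmul]
      have hx : x = HB.str (TensorProduct.lid K H
          (TensorProduct.map HB.counit LinearMap.id (HB.comul x))) := by
        rw [HB.counit_comul_left, HB.str.apply_symm_apply]
      conv_rhs => rw [hx]
      generalize HB.comul x = v
      induction v using TensorProduct.induction_on with
      | zero => simp
      | add p q hp hq => simp only [add_tmul, map_add, tmul_add, add_tmul, LinearMap.map_add,
          TensorProduct.add_tmul, LinearMap.add_apply, hp, hq, LinearEquiv.map_add]
      | tmul u' w' =>
        simp only [TensorProduct.map_tmul, TensorProduct.assoc_tmul, TensorProduct.lift.tmul,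
          LinearMap.comp_apply, LinearEquiv.coe_coe, LinearMap.flip_apply, LinearMap.id_apply,
          TensorProduct.lid_tmul, map_smul, LinearMap.smul_apply, aaOneZpow, hbOneZpow,
          hact.act_one, hbCounitZpow, AA.one_mul, smul_tmul', zpowSucc]

lemma sigmaStr (hact : IsWeakModuleAlgebra HB AA act)
    (B : HomBialgebraStr K (A ⊗[K] H))
    (hB : IsRadfordBiproduct HB AA AC act coact σ m k B) (x y : H) :
    AA.str (σ x y) = σ (HB.str x) (HB.str y) := by
  set f1 := (AA.str.toLinearMap ∘ₗ AA.str.toLinearMap ∘ₗ TensorProduct.lift σ ∘ₗ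
      TensorProduct.map (HB.str ^ k).toLinearMap (HB.str ^ k).toLinearMap) with hf1
  set g1 := (HB.str.toLinearMap ∘ₗ TensorProduct.lift HB.mul) with hg1
  have e1 : ∀ h g : H,
      TensorProduct.map (AA.str.toLinearMap ∘ₗ f1) (HB.str.toLinearMap ∘ₗ g1)
          (TensorProduct.tensorTensorTensorComm K H H H H (HB.comul h ⊗ₜ[K] HB.comul g))
        = TensorProduct.map f1 g1
            (TensorProduct.tensorTensorTensorComm K H H H H
              ((TensorProduct.map HB.str.toLinearMap HB.str.toLinearMap (HB.comul h)) ⊗ₜ[K]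
                (TensorProduct.map HB.str.toLinearMap HB.str.toLinearMap (HB.comul g)))) := by
    intro h g
    have h1 := B.str_mul (AA.one ⊗ₜ[K] h) (AA.one ⊗ₜ[K] g)
    rw [hB.mul_def, hB.str_def, cpOneOne HB AA act σ m k hact, TensorProduct.congr_tmul,
      TensorProduct.congr_tmul, AA.str_one, hB.mul_def, cpOneOne HB AA act σ m k hact,
      HB.comul_str, HB.comul_str] at h1
    rw [← h1, ← mapMap]
    rfl
  have e2 : ∀ h g : H,
      AA.str (AA.str (AA.str (σ ((HB.str ^ k) (HB.str.symm h)) ((HB.str ^ k) (HB.str.symm g)))))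
        = AA.str (AA.str (σ ((HB.str ^ k) h) ((HB.str ^ k) g))) := by
    intro h g
    have h2 := congrArg
      (fun z => TensorProduct.rid K A (TensorProduct.map LinearMap.id HB.counit z)) (e1 h g)
    refine Eq.trans ?_ (Eq.trans h2 ?_)
    · -- LHS claim
      conv_lhs => rw [← HB.counit_comul_right h, ← HB.counit_comul_right g]
      generalize HB.comul h = t
      generalize HB.comul g = u
      induction t using TensorProduct.induction_on with
      | zero => simp
      | add p q hp hq => simp only [map_add, add_tmul, LinearMap.map_add, LinearEquiv.map_add,
          LinearMap.add_apply, hp, hq]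
      | tmul x' y' =>
        induction u using TensorProduct.induction_on with
        | zero => simp
        | add p q hp hq => simp only [map_add, tmul_add, LinearMap.map_add, LinearEquiv.map_add,
            LinearMap.add_apply, hp, hq]
        | tmul z w =>
          simp only [TensorProduct.tensorTensorTensorComm_tmul, TensorProduct.map_tmul,
            TensorProduct.rid_tmul, TensorProduct.lift.tmul, LinearMap.id_apply,
            LinearMap.comp_apply, LinearEquiv.coe_coe, map_smul, LinearMap.smul_apply,
            LinearMap.map_smul, HB.counit_str, HB.counit_mul, hf1, hg1, smul_smul]
          rw [mul_comm]
    · -- RHS claim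
      conv_rhs => rw [show h = HB.str (HB.str.symm h) from (HB.str.apply_symm_apply h).symm,
        show g = HB.str (HB.str.symm g) from (HB.str.apply_symm_apply g).symm,
        ← HB.counit_comul_right h, ← HB.counit_comul_right g]
      generalize HB.comul h = t
      generalize HB.comul g = u
      induction t using TensorProduct.induction_on with
      | zero => simp
      | add p q hp hq => simp only [map_add, add_tmul, LinearMap.map_add, LinearEquiv.map_add,
          LinearMap.add_apply, hp, hq]
      | tmul x' y' =>
        induction u using TensorProduct.induction_on with
        | zero => simp
        | add p q hp hq => simp only [map_add, tmul_add, LinearMap.map_add, LinearEquiv.map_add,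
            LinearMap.add_apply, hp, hq]
        | tmul z w =>
          simp only [TensorProduct.tensorTensorTensorComm_tmul, TensorProduct.map_tmul,
            TensorProduct.rid_tmul, TensorProduct.lift.tmul, LinearMap.id_apply,
            LinearMap.comp_apply, LinearEquiv.coe_coe, map_smul, LinearMap.smul_apply,
            LinearMap.map_smul, HB.counit_str, HB.counit_mul, hf1, hg1, smul_smul]
          rw [mul_comm]
  have e3 : AA.str (AA.str (AA.str (σ x y))) = AA.str (AA.str (σ (HB.str x) (HB.str y))) := by
    have := e2 ((HB.str ^ (1 + -k)) x) ((HB.str ^ (1 + -k)) y)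
    simp only [strSymmZpow, zpowZpow] at this
    rw [show k + (-1 + (1 + -k)) = 0 from by ring, show k + (1 + -k) = 1 from by ring,
      zpow_zero, zpow_one] at this
    simpa only [show ∀ y : H, (1 : H ≃ₗ[K] H) y = y from fun _ => rfl] using this
  have := congrArg (fun z => AA.str.symm (AA.str.symm z)) e3
  simpa only [AA.str.symm_apply_apply] using this

end NormAux2
section NormAux3

variable {K H A : Type*} [Field K] [AddCommGroup H] [Module K H] [AddCommGroup A] [Module K A]
variable (HB : HomBialgebraStr K H) (AA : HomAlgebraStr K A) (AC : HomCoalgebraStr K A)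
variable (act : H →ₗ[K] A →ₗ[K] A) (coact : A →ₗ[K] H ⊗[K] A)
variable (σ : H →ₗ[K] H →ₗ[K] A) (m k : ℤ)

lemma cpOneB (hact : IsWeakModuleAlgebra HB AA act)
    (B : HomBialgebraStr K (A ⊗[K] H))
    (hB : IsRadfordBiproduct HB AA AC act coact σ m k B) (h : H) (b : A) :
    cpMulElem HB AA act σ m k AA.one h b HB.one
      = TensorProduct.map
          (AA.str.toLinearMap ∘ₗ AA.str.toLinearMap ∘ₗ (act.flip ((AA.str ^ (-2:ℤ)) b)) ∘ₗ
            (HB.str ^ m).toLinearMap ∘ₗ HB.str.symm.toLinearMap)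
          (HB.str.toLinearMap ∘ₗ HB.str.toLinearMap)
          (HB.comul h) := by
  unfold cpMulElem
  rw [HB.comul_one]
  generalize HB.comul h = t
  induction t using TensorProduct.induction_on with
  | zero => simp
  | add p q hp hq => simp only [add_tmul, map_add, hp, hq]
  | tmul x y =>
    simp only [TensorProduct.tensorTensorTensorComm_tmul, TensorProduct.map_tmul,
      LinearMap.id_apply, LinearMap.comp_apply, LinearEquiv.coe_coe, TensorProduct.lift.tmul,
      HB.mul_one]
    conv_rhs => rw [← HB.counit_comul_right x]
    generalize HB.comul x = v
    induction v using TensorProduct.induction_on with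
    | zero => simp
    | add p q hp hq => simp only [add_tmul, map_add, tmul_add, add_tmul, LinearMap.map_add,
        TensorProduct.add_tmul, LinearMap.add_apply, hp, hq, LinearEquiv.map_add]
    | tmul u w =>
      simp only [TensorProduct.map_tmul, TensorProduct.assoc_tmul, TensorProduct.lift.tmul,
        LinearMap.comp_apply, LinearEquiv.coe_coe, LinearMap.flip_apply, LinearMap.id_apply,
        TensorProduct.rid_tmul, map_smul, LinearMap.smul_apply, hbOneZpow,
        sigmaOne HB AA AC act coact σ m k hact B hB, hbCounitZpow, AA.mul_one, AA.one_mul,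
        smul_tmul']

lemma actStr (hact : IsWeakModuleAlgebra HB AA act)
    (B : HomBialgebraStr K (A ⊗[K] H))
    (hB : IsRadfordBiproduct HB AA AC act coact σ m k B) (u : H) (a : A) :
    AA.str (act u a) = act (HB.str u) (AA.str a) := by
  set fb := fun b : A => (AA.str.toLinearMap ∘ₗ AA.str.toLinearMap ∘ₗ
      (act.flip ((AA.str ^ (-2:ℤ)) b)) ∘ₗ
      (HB.str ^ m).toLinearMap ∘ₗ HB.str.symm.toLinearMap) with hfb
  set g1 := (HB.str.toLinearMap ∘ₗ HB.str.toLinearMap : H →ₗ[K] H) with hg1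
  have e1 : ∀ (h : H) (b : A),
      TensorProduct.map (AA.str.toLinearMap ∘ₗ fb b) (HB.str.toLinearMap ∘ₗ g1) (HB.comul h)
        = TensorProduct.map (fb (AA.str b)) g1
            (TensorProduct.map HB.str.toLinearMap HB.str.toLinearMap (HB.comul h)) := by
    intro h b
    have h1 := B.str_mul (AA.one ⊗ₜ[K] h) (b ⊗ₜ[K] HB.one)
    rw [hB.mul_def, hB.str_def, cpOneB HB AA AC act coact σ m k hact B hB,
      TensorProduct.congr_tmul, TensorProduct.congr_tmul, AA.str_one, HB.str_one, hB.mul_def,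
      cpOneB HB AA AC act coact σ m k hact B hB, HB.comul_str] at h1
    rw [← h1, ← mapMap]
    rfl
  have e2 : ∀ (h : H) (b : A),
      AA.str (AA.str (AA.str
          (act ((HB.str ^ m) (HB.str.symm (HB.str.symm h))) ((AA.str ^ (-2:ℤ)) b))))
        = AA.str (AA.str (act ((HB.str ^ m) (HB.str.symm h)) ((AA.str ^ (-2:ℤ)) (AA.str b)))) := by
    intro h b
    have h2 := congrArg
      (fun z => TensorProduct.rid K A (TensorProduct.map LinearMap.id HB.counit z)) (e1 h b)
    refine Eq.trans ?_ (Eq.trans h2 ?_)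
    · conv_lhs => rw [← HB.counit_comul_right h]
      generalize HB.comul h = t
      induction t using TensorProduct.induction_on with
      | zero => simp
      | add p q hp hq => simp only [map_add, LinearMap.map_add, LinearEquiv.map_add,
          LinearMap.add_apply, hp, hq]
      | tmul x y =>
        simp only [TensorProduct.map_tmul, TensorProduct.rid_tmul, LinearMap.id_apply,
          LinearMap.comp_apply, LinearEquiv.coe_coe, map_smul, LinearMap.smul_apply,
          LinearMap.map_smul, HB.counit_str, LinearMap.flip_apply, HB.str.symm_apply_apply,
          hfb, hg1]
    · conv_rhs => rw [← HB.counit_comul_right h]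
      generalize HB.comul h = t
      induction t using TensorProduct.induction_on with
      | zero => simp
      | add p q hp hq => simp only [map_add, LinearMap.map_add, LinearEquiv.map_add,
          LinearMap.add_apply, hp, hq]
      | tmul x y =>
        simp only [TensorProduct.map_tmul, TensorProduct.rid_tmul, LinearMap.id_apply,
          LinearMap.comp_apply, LinearEquiv.coe_coe, map_smul, LinearMap.smul_apply,
          LinearMap.map_smul, HB.counit_str, LinearMap.flip_apply, HB.str.symm_apply_apply,
          hfb, hg1]
  have e3 : AA.str (AA.str (AA.str (act u a))) = AA.str (AA.str (act (HB.str u) (AA.str a))) := by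
    have := e2 ((HB.str ^ (2 + -m)) u) ((AA.str ^ (2:ℤ)) a)
    simp only [strSymmZpow, strApplyZpow, zpowZpow] at this
    rw [show m + (-1 + (-1 + (2 + -m))) = 0 from by ring,
      show m + (-1 + (2 + -m)) = 1 from by ring,
      show (-2:ℤ) + 2 = 0 from by ring, show (-2:ℤ) + (2 + 1) = 1 from by ring,
      zpow_zero, zpow_one, zpow_one] at this
    simpa only [show ∀ y : H, (1 : H ≃ₗ[K] H) y = y from fun _ => rfl,
      show ∀ y : A, (1 : A ≃ₗ[K] A) y = y from fun _ => rfl, zpow_zero] using this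
  have := congrArg (fun z => AA.str.symm (AA.str.symm z)) e3
  simpa only [AA.str.symm_apply_apply] using this

end NormAux3
section PAux

variable {K H A : Type*} [Field K] [AddCommGroup H] [Module K H] [AddCommGroup A] [Module K A]
variable (HB : HomBialgebraStr K H) (AA : HomAlgebraStr K A) (AC : HomCoalgebraStr K A)
variable (act : H →ₗ[K] A →ₗ[K] A) (coact : A →ₗ[K] H ⊗[K] A)
variable (σ : H →ₗ[K] H →ₗ[K] A) (m k : ℤ)

lemma zpowApplyStr (e : H ≃ₗ[K] H) (n : ℤ) (x : H) :
    (e ^ n) (e x) = (e ^ (n + 1)) x := (zpowSucc e n x).symm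

lemma cpP1 (hact : IsWeakModuleAlgebra HB AA act)
    (B : HomBialgebraStr K (A ⊗[K] H))
    (hB : IsRadfordBiproduct HB AA AC act coact σ m k B) (l : H) (a : A) (h : H) :
    cpMulElem HB AA act σ m k AA.one ((HB.str ^ (-m)) l) a h
      = philElem HB AA act σ m k l a h := by
  unfold cpMulElem philElem
  rw [hbComulZpow]
  generalize HB.comul l = t
  generalize HB.comul h = u
  induction t using TensorProduct.induction_on with
  | zero => simp
  | add p q hp hq => simp only [map_add, add_tmul, LinearMap.map_add, hp, hq]
  | tmul x y =>
    induction u using TensorProduct.induction_on with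
    | zero => simp
    | add p q hp hq => simp only [map_add, tmul_add, LinearMap.map_add, hp, hq]
    | tmul z w =>
      simp only [TensorProduct.map_tmul, TensorProduct.tensorTensorTensorComm_tmul,
        LinearMap.id_apply, LinearMap.comp_apply, LinearEquiv.coe_coe, TensorProduct.lift.tmul,
        hbComulZpow, HB.str_mul, strApplyZpow, zpowApplyStr, zpowZpow,
        show (-m:ℤ) + 1 = 1 - m from by ring]
      generalize HB.comul x = v
      induction v using TensorProduct.induction_on with
      | zero => simp
      | add p q hp hq => simp only [map_add, add_tmul, tmul_add, LinearMap.map_add,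
          LinearMap.add_apply, TensorProduct.add_tmul, hp, hq]
      | tmul x1 x2 =>
        simp only [TensorProduct.map_tmul, TensorProduct.assoc_tmul, TensorProduct.lift.tmul,
          LinearMap.comp_apply, LinearEquiv.coe_coe, LinearMap.flip_apply, LinearMap.id_apply,
          AA.one_mul, AA.str_mul, actStr HB AA AC act coact σ m k hact B hB,
          sigmaStr HB AA AC act coact σ m k hact B hB,
          strApplyZpow, zpowApplyStr, zpowZpow,
          show m + -m = 0 from by ring, zpow_zero,
          show ∀ y : H, (1 : H ≃ₗ[K] H) y = y from fun _ => rfl,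
          show (-2:ℤ) + 1 = -1 from by ring,
          show k + 1 + -m + 1 = k + 2 - m from by ring,
          show k + -m + 1 + 1 = k + 2 - m from by ring]

lemma cpP2 (hact : IsWeakModuleAlgebra HB AA act)
    (B : HomBialgebraStr K (A ⊗[K] H))
    (hB : IsRadfordBiproduct HB AA AC act coact σ m k B) (a : A) (h : H) (l : H) :
    cpMulElem HB AA act σ m k a h AA.one ((HB.str ^ (-m)) l)
      = phirElem HB AA σ m k a h l := by
  unfold cpMulElem phirElem
  rw [hbComulZpow]
  generalize HB.comul h = t
  generalize HB.comul l = u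
  induction t using TensorProduct.induction_on with
  | zero => simp
  | add p q hp hq => simp only [map_add, add_tmul, LinearMap.map_add, hp, hq]
  | tmul x y =>
    induction u using TensorProduct.induction_on with
    | zero => simp
    | add p q hp hq => simp only [map_add, tmul_add, LinearMap.map_add, hp, hq]
    | tmul z w =>
      simp only [TensorProduct.map_tmul, TensorProduct.tensorTensorTensorComm_tmul,
        LinearMap.id_apply, LinearMap.comp_apply, LinearEquiv.coe_coe, TensorProduct.lift.tmul,
        HB.str_mul, strApplyZpow, zpowApplyStr, zpowZpow,
        show (-m:ℤ) + 1 = 1 - m from by ring]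
      have hx : x = HB.str (TensorProduct.lid K H
          (TensorProduct.map HB.counit LinearMap.id (HB.comul x))) := by
        rw [HB.counit_comul_left, HB.str.apply_symm_apply]
      conv_rhs => rw [hx]
      generalize HB.comul x = v
      induction v using TensorProduct.induction_on with
      | zero => simp
      | add p q hp hq => simp only [map_add, add_tmul, tmul_add, LinearMap.map_add,
          LinearMap.add_apply, TensorProduct.add_tmul, hp, hq]
      | tmul x1 x2 =>
        simp only [TensorProduct.map_tmul, TensorProduct.assoc_tmul, TensorProduct.lift.tmul,
          LinearMap.comp_apply, LinearEquiv.coe_coe, LinearMap.flip_apply, LinearMap.id_apply,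
          TensorProduct.lid_tmul, map_smul, LinearMap.smul_apply, LinearMap.map_smul,
          aaOneZpow, hact.act_one, hbCounitZpow, AA.one_mul, smul_tmul',
          sigmaStr HB AA AC act coact σ m k hact B hB,
          strApplyZpow, zpowApplyStr, zpowZpow,
          show k + -m + 1 = k + 1 - m from by ring]

end PAux
/-- Lemma 4.9: `(A ♯_σ^× H, β ⊗ α, φ^l, φ^r)` is a weak `(H, α)` Hom-bimodule. -/
theorem biproduct_weak_hom_bimodule
    {K H A : Type*} [Field K] [AddCommGroup H] [Module K H] [AddCommGroup A] [Module K A]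
    (HB : HomBialgebraStr K H) (AA : HomAlgebraStr K A) (AC : HomCoalgebraStr K A)
    (act : H →ₗ[K] A →ₗ[K] A) (hact : IsWeakModuleAlgebra HB AA act)
    (coact : A →ₗ[K] H ⊗[K] A) (hcc : IsComoduleCoalgebra HB AC coact)
    (σ σinv : H →ₗ[K] H →ₗ[K] A)
    (hconv : IsConvInvPair HB AA σ σinv) (m k : ℤ)
    (B : HomBialgebraStr K (A ⊗[K] H))
    (hB : IsRadfordBiproduct HB AA AC act coact σ m k B)
    (φl : H →ₗ[K] (A ⊗[K] H) →ₗ[K] (A ⊗[K] H))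
    (hφl : ∀ (l : H) (a : A) (h : H), φl l (a ⊗ₜ[K] h) = philElem HB AA act σ m k l a h)
    (φr : (A ⊗[K] H) →ₗ[K] H →ₗ[K] (A ⊗[K] H))
    (hφr : ∀ (a : A) (h : H) (l : H), φr (a ⊗ₜ[K] h) l = phirElem HB AA σ m k a h l) :
    IsWeakHomBimodule HB (TensorProduct.map AA.str.toLinearMap HB.str.toLinearMap) φl φr := by
  have hone : ∀ x : H, (AA.one ⊗ₜ[K] ((HB.str ^ (-m)) (HB.str x)))
      = B.str (AA.one ⊗ₜ[K] ((HB.str ^ (-m)) x)) := by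
    intro x
    rw [hB.str_def, TensorProduct.congr_tmul, AA.str_one, zpowApplyStr, strApplyZpow]
  have Lstar : ∀ (l : H) (x : A ⊗[K] H),
      φl l x = B.mul (AA.one ⊗ₜ[K] ((HB.str ^ (-m)) l)) x := by
    intro l x
    induction x using TensorProduct.induction_on with
    | zero => simp
    | add p q hp hq => simp only [map_add, hp, hq]
    | tmul a h =>
      rw [hφl, hB.mul_def]
      exact (cpP1 HB AA AC act coact σ m k hact B hB l a h).symm
  have Rstar : ∀ (x : A ⊗[K] H) (l : H),
      φr x l = B.mul x (AA.one ⊗ₜ[K] ((HB.str ^ (-m)) l)) := by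
    intro x l
    induction x using TensorProduct.induction_on with
    | zero => simp
    | add p q hp hq => simp only [map_add, LinearMap.add_apply, hp, hq]
    | tmul a h =>
      rw [hφr, hB.mul_def]
      exact (cpP2 HB AA AC act coact σ m k hact B hB a h l).symm
  refine ⟨?_, ?_, ?_⟩
  · intro x
    rw [Lstar, hbOneZpow, ← hB.one_def, B.one_mul, hB.str_def]
    rfl
  · intro x
    rw [Rstar, hbOneZpow, ← hB.one_def, B.mul_one, hB.str_def]
    rfl
  · intro h x g
    rw [Lstar, Rstar, Lstar, Rstar, hone, hone, B.hom_assoc]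
end
end

section
/- Let C ⇄ A ⇄ H (with maps j, p, i, π) be a weak m-Hom admissible mapping system, with (C ♯_σ^× H, β ⊗ α) the Radford [(m,k),m]-biproduct monoidal Hom-bialgebra and (A, γ) a monoidal Hom-bialgebra. Define f: C ♯_σ^× H → A by f(c ⊗ h) = γ⁻¹(j(c)i(h)) and g: A → C ♯_σ^× H by g(a) = β(p(a₁)) ⊗ α(π(a₂)). Then f∘(β ⊗ α) = γ∘f, g∘γ = (β ⊗ α)∘g, f∘g = id_A, and g∘f = id_{C ♯_σ^× H}. -/
open TensorProduct

noncomputable section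

section AdmAux

variable {K M N : Type*} [Field K] [AddCommGroup M] [Module K M] [AddCommGroup N] [Module K N]

theorem adm_zc (e : M ≃ₗ[K] M) (n : ℤ) (x : M) : (e ^ (-n)) ((e ^ n) x) = x := by
  have h : (e ^ (-n)) * (e ^ n) = 1 := by rw [← zpow_add]; simp
  have h2 : (e ^ (-n)) ((e ^ n) x) = ((e ^ (-n)) * (e ^ n)) x := rfl
  rw [h2, h]; rfl

theorem adm_zc' (e : M ≃ₗ[K] M) (n : ℤ) (x : M) : (e ^ n) ((e ^ (-n)) x) = x := by
  have := adm_zc e (-n) x; rwa [neg_neg] at this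

theorem adm_zpres (f : M →ₗ[K] N) (e : M ≃ₗ[K] M) (hf : ∀ x, f (e x) = f x) (n : ℤ) :
    ∀ x, f ((e ^ n) x) = f x := by
  have hsymm : ∀ x, f (e.symm x) = f x := fun x => by
    conv_rhs => rw [← e.apply_symm_apply x, hf]
  induction n using Int.induction_on with
  | zero => intro x; rfl
  | succ k ih =>
      intro x
      have h1 : (e ^ ((k : ℤ) + 1)) x = (e ^ (k : ℤ)) (e x) := by rw [zpow_add_one]; rfl
      rw [h1, ih, hf]
  | pred k ih =>
      intro x
      have h1 : (e ^ ((-k : ℤ) - 1)) x = (e ^ (-k : ℤ)) (e⁻¹ x) := by rw [zpow_sub_one]; rfl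
      have h2 : (e⁻¹ : M ≃ₗ[K] M) x = e.symm x := rfl
      rw [h1, ih, h2, hsymm]

theorem adm_zfix (e : M ≃ₗ[K] M) (q : M) (hq : e q = q) (n : ℤ) : (e ^ n) q = q := by
  have hs : e.symm q = q := by conv_lhs => rw [← hq, e.symm_apply_apply]
  induction n using Int.induction_on with
  | zero => rfl
  | succ k ih =>
      have h1 : (e ^ ((k : ℤ) + 1)) q = (e ^ (k : ℤ)) (e q) := by rw [zpow_add_one]; rfl
      rw [h1, hq, ih]
  | pred k ih =>
      have h1 : (e ^ ((-k : ℤ) - 1)) q = (e ^ (-k : ℤ)) (e⁻¹ q) := by rw [zpow_sub_one]; rfl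
      have h2 : (e⁻¹ : M ≃ₗ[K] M) q = e.symm q := rfl
      rw [h1, h2, hs, ih]

end AdmAux

/-- The first part of the proof of Theorem 4.11: `f` and `g` intertwine the structure maps
and are mutually inverse. -/
theorem admissible_system_f_g_inverse
    {K C H A : Type*} [Field K] [AddCommGroup C] [Module K C] [AddCommGroup H] [Module K H]
    [AddCommGroup A] [Module K A]
    (HB : HomBialgebraStr K H) (CA : HomAlgebraStr K C) (CC : HomCoalgebraStr K C)
    (act : H →ₗ[K] C →ₗ[K] C) (hact : IsWeakModuleAlgebra HB CA act)
    (coact : C →ₗ[K] H ⊗[K] C) (hcc : IsComoduleCoalgebra HB CC coact)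
    (σ : H →ₗ[K] H →ₗ[K] C) (m k : ℤ)
    (B : HomBialgebraStr K (C ⊗[K] H))
    (hB : IsRadfordBiproduct HB CA CC act coact σ m k B)
    (AB : HomBialgebraStr K A)
    (j : C →ₗ[K] A) (p : A →ₗ[K] C) (i : H →ₗ[K] A) (π : A →ₗ[K] H)
    (sys : WeakAdmissibleSystem HB CA CC coact m AB j p i π) :
    (∀ x : C ⊗[K] H,
      admF AB j i (TensorProduct.map CC.str.toLinearMap HB.str.toLinearMap x)
        = AB.str (admF AB j i x))
    ∧ (∀ a : A,
      admG HB CC AB p π (AB.str a)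
        = TensorProduct.map CC.str.toLinearMap HB.str.toLinearMap (admG HB CC AB p π a))
    ∧ (∀ a : A, admF AB j i (admG HB CC AB p π a) = a)
    ∧ (∀ x : C ⊗[K] H, admG HB CC AB p π (admF AB j i x) = x) := by
  have hF : ∀ (c : C) (h : H),
      admF AB j i (c ⊗ₜ[K] h) = AB.str.symm (AB.mul (j c) (i h)) := by
    intro c h
    simp [admF]
  refine ⟨?_, ?_, ?_, ?_⟩
  · -- f ∘ (β ⊗ α) = γ ∘ f
    intro x
    induction x using TensorProduct.induction_on with
    | zero => simp
    | add y z hy hz => simp only [map_add, hy, hz]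
    | tmul c h =>
        rw [TensorProduct.map_tmul, hF, hF]
        simp only [LinearEquiv.coe_coe]
        rw [sys.j_str, sys.i_str, ← AB.str_mul]
        simp
  · -- g ∘ γ = (β ⊗ α) ∘ g
    intro a
    have hcomp : (TensorProduct.map (CC.str.toLinearMap ∘ₗ p) (HB.str.toLinearMap ∘ₗ π)) ∘ₗ
        (TensorProduct.map AB.str.toLinearMap AB.str.toLinearMap)
        = (TensorProduct.map CC.str.toLinearMap HB.str.toLinearMap) ∘ₗ
          (TensorProduct.map (CC.str.toLinearMap ∘ₗ p) (HB.str.toLinearMap ∘ₗ π)) := by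
      rw [← TensorProduct.map_comp, ← TensorProduct.map_comp]
      congr 1 <;> ext b <;> simp [sys.p_str, sys.pi_str]
    have h2 := LinearMap.congr_fun hcomp (AB.comul a)
    simp only [LinearMap.comp_apply] at h2
    simp only [admG, LinearMap.comp_apply]
    rw [AB.comul_str, h2]
  · -- f ∘ g = id
    intro a
    have hfg : TensorProduct.lift ((AB.mul ∘ₗ j).compl₂ i) ∘ₗ
        TensorProduct.map (CC.str.toLinearMap ∘ₗ p) (HB.str.toLinearMap ∘ₗ π)
        = AB.str.toLinearMap ∘ₗ TensorProduct.lift AB.mul ∘ₗ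
          TensorProduct.map (j ∘ₗ p) (i ∘ₗ π) := by
      apply TensorProduct.ext'
      intro u v
      simp only [LinearMap.comp_apply, TensorProduct.map_tmul, TensorProduct.lift.tmul,
        LinearMap.compl₂_apply, LinearEquiv.coe_coe]
      rw [sys.j_str, sys.i_str, ← AB.str_mul]
    have h3 := LinearMap.congr_fun hfg (AB.comul a)
    simp only [LinearMap.comp_apply, LinearEquiv.coe_coe] at h3
    simp only [admF, admG, LinearMap.comp_apply, LinearEquiv.coe_coe]
    rw [h3, LinearEquiv.symm_apply_apply, sys.split]
  · -- g ∘ f = id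
    intro x
    induction x using TensorProduct.induction_on with
    | zero => simp
    | add y z hy hz => simp only [map_add, hy, hz]
    | tmul c h =>
        rw [hF]
        set M := AB.mul (j c) (i h) with hMdef
        have h1 : AB.comul M
            = TensorProduct.map AB.str.toLinearMap AB.str.toLinearMap
                (AB.comul (AB.str.symm M)) := by
          rw [← AB.comul_str, LinearEquiv.apply_symm_apply]
        have hcomp : (TensorProduct.map p π) ∘ₗ
            (TensorProduct.map AB.str.toLinearMap AB.str.toLinearMap)
            = TensorProduct.map (CC.str.toLinearMap ∘ₗ p) (HB.str.toLinearMap ∘ₗ π) := by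
          rw [← TensorProduct.map_comp]
          congr 1 <;> ext b <;> simp [sys.p_str, sys.pi_str]
        have hg : admG HB CC AB p π (AB.str.symm M) = TensorProduct.map p π (AB.comul M) := by
          rw [h1, ← LinearMap.comp_apply, hcomp]
          simp [admG]
        rw [hg, hMdef, AB.comul_mul, ← sys.i_comul h]
        set Ψ : (A ⊗[K] A) ⊗[K] H →ₗ[K] C ⊗[K] H :=
          TensorProduct.map (CC.str.toLinearMap ∘ₗ p)
              (TensorProduct.lift HB.mul ∘ₗ TensorProduct.map π LinearMap.id) ∘ₗ
            (TensorProduct.assoc K A A H).toLinearMap with hPsi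
        have claim1 : (TensorProduct.map p π) ∘ₗ
            ((tensorSquareMul AB.mul).flip (TensorProduct.map i i (HB.comul h)))
            = Ψ ∘ₗ (TensorProduct.mk K (A ⊗[K] A) H).flip (HB.str.symm h) := by
          apply TensorProduct.ext'
          intro u v
          have hLR : (TensorProduct.map p π) ∘ₗ (tensorSquareMul AB.mul (u ⊗ₜ[K] v)) ∘ₗ
              (TensorProduct.map i i)
              = (TensorProduct.mk K C H (CC.str (p u)) ∘ₗ HB.mul (π v)) ∘ₗ
                (TensorProduct.lid K H).toLinearMap ∘ₗ
                TensorProduct.map HB.counit LinearMap.id := by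
            apply TensorProduct.ext'
            intro g₁ g₂
            have hp1 : p (AB.mul u (i g₁)) = HB.counit g₁ • CC.str (p u) := by
              have hpr := sys.p_right_act u ((HB.str ^ m) g₁)
              rw [adm_zc HB.str m g₁, adm_zpres HB.counit HB.str HB.counit_str m g₁] at hpr
              exact hpr
            simp [tensorSquareMul, TensorProduct.curry_apply, hp1, sys.pi_mul, sys.pi_i,
              TensorProduct.smul_tmul]
          simp only [LinearMap.comp_apply, LinearMap.flip_apply, TensorProduct.mk_apply]
          have step := LinearMap.congr_fun hLR (HB.comul h)
          simp only [LinearMap.comp_apply, LinearEquiv.coe_coe] at step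
          rw [step, HB.counit_comul_left]
          simp [hPsi]
        have final1 : TensorProduct.map p π
            (tensorSquareMul AB.mul (AB.comul (j c)) (TensorProduct.map i i (HB.comul h)))
            = Ψ (AB.comul (j c) ⊗ₜ[K] HB.str.symm h) := by
          have hcl := LinearMap.congr_fun claim1 (AB.comul (j c))
          simpa only [LinearMap.comp_apply, LinearMap.flip_apply, TensorProduct.mk_apply]
            using hcl
        have claim2 : ∀ t : H, Ψ (AB.comul (j c) ⊗ₜ[K] t) = c ⊗ₜ[K] HB.str t := by
          intro t
          have hx : Ψ ∘ₗ (TensorProduct.mk K (A ⊗[K] A) H).flip t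
              = (TensorProduct.map CC.str.toLinearMap
                    ((HB.mul.flip t) ∘ₗ (HB.str ^ m).toLinearMap)) ∘ₗ
                (TensorProduct.map p ((HB.str ^ (-m)).toLinearMap ∘ₗ π)) := by
            apply TensorProduct.ext'
            intro u v
            simp [hPsi]
          have hy := LinearMap.congr_fun hx (AB.comul (j c))
          simp only [LinearMap.comp_apply, LinearMap.flip_apply, TensorProduct.mk_apply] at hy
          rw [hy]
          have hcc2 : TensorProduct.map p ((HB.str ^ (-m)).toLinearMap ∘ₗ π)
              = (TensorProduct.map p (LinearMap.id : H →ₗ[K] H)) ∘ₗ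
                (TensorProduct.map (LinearMap.id : A →ₗ[K] A)
                  ((HB.str ^ (-m)).toLinearMap ∘ₗ π)) := by
            rw [← TensorProduct.map_comp]
            simp
          rw [hcc2, LinearMap.comp_apply, sys.p_cor c]
          simp [adm_zfix HB.str HB.one HB.str_one m, HB.one_mul]
        rw [final1, claim2]
        simp
end
end

section
/- Let C ⇄ A ⇄ H (with maps j, p, i, π) be a weak m-Hom admissible mapping system with (A, γ) a monoidal Hom-bialgebra. Then for all h ∈ H and b ∈ C: i(h)·j(b) = j(p(i(h₁)·j(β⁻¹(b)))) · i(α(h₂)). -/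
open TensorProduct

noncomputable section

section Aux

variable {K C H A : Type*} [Field K] [AddCommGroup C] [Module K C] [AddCommGroup H] [Module K H]
    [AddCommGroup A] [Module K A]

lemma aux_zpow_fixed (e : H ≃ₗ[K] H) (x : H) (hx : e x = x) : ∀ n : ℤ, (e ^ n) x = x := by
  have hs : e.symm x = x := by nth_rewrite 1 [← hx]; exact e.symm_apply_apply x
  intro n
  induction n using Int.induction_on with
  | zero => simp
  | succ n ih =>
      rw [zpow_add_one]
      show (e ^ (n : ℤ)) (e x) = x
      rw [hx, ih]
  | pred n ih =>
      rw [zpow_sub_one]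
      show (e ^ (-(n : ℤ))) (e⁻¹ x) = x
      rw [show (e⁻¹ : H ≃ₗ[K] H) x = e.symm x from rfl, hs, ih]

lemma aux_tsm_tmul (mul : A →ₗ[K] A →ₗ[K] A) (a b c d : A) :
    tensorSquareMul mul (a ⊗ₜ[K] b) (c ⊗ₜ[K] d) = mul a c ⊗ₜ[K] mul b d := by
  simp [tensorSquareMul]

/-- auxiliary reduced multiplication map. -/
def auxRun (HB : HomBialgebraStr K H) (AB : HomBialgebraStr K A)
    (j : C →ₗ[K] A) (p : A →ₗ[K] C) (i : H →ₗ[K] A) :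
    (H ⊗[K] H) ⊗[K] (A ⊗[K] H) →ₗ[K] A :=
  TensorProduct.lift AB.mul ∘ₗ
    TensorProduct.map (j ∘ₗ p ∘ₗ TensorProduct.lift (AB.mul ∘ₗ i))
      (i ∘ₗ TensorProduct.lift HB.mul) ∘ₗ
    (TensorProduct.tensorTensorTensorComm K H H A H).toLinearMap

end Aux
/-- The key identity `i(h)·j(b) = j(p(i(h₁)·j(β⁻¹(b)))) · i(α(h₂))` in the proof of
Theorem 4.11. -/
theorem admissible_system_i_j_exchange
    {K C H A : Type*} [Field K] [AddCommGroup C] [Module K C] [AddCommGroup H] [Module K H]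
    [AddCommGroup A] [Module K A]
    (HB : HomBialgebraStr K H) (CA : HomAlgebraStr K C) (CC : HomCoalgebraStr K C)
    (coact : C →ₗ[K] H ⊗[K] C) (m : ℤ)
    (AB : HomBialgebraStr K A)
    (j : C →ₗ[K] A) (p : A →ₗ[K] C) (i : H →ₗ[K] A) (π : A →ₗ[K] H)
    (sys : WeakAdmissibleSystem HB CA CC coact m AB j p i π) :
    ∀ (h : H) (b : C),
      AB.mul (i h) (j b)
        = TensorProduct.lift
            ((AB.mul ∘ₗ (j ∘ₗ p ∘ₗ (AB.mul.flip (j (CC.str.symm b))) ∘ₗ i)).compl₂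
              (i ∘ₗ HB.str.toLinearMap))
            (HB.comul h) := by
  intro h b
  -- Step 1: (id ⊗ π)(Δ_A(j b)) = j(β⁻¹ b) ⊗ 1
  obtain ⟨z, hz⟩ := sys.sub_r b
  have hzval : z = CC.str.symm b ⊗ₜ[K] HB.one := by
    have h1 := sys.p_cor b
    rw [hz] at h1
    have h2 : ∀ w : C ⊗[K] H,
        TensorProduct.map p (LinearMap.id : H →ₗ[K] H)
          (TensorProduct.map j (LinearMap.id : H →ₗ[K] H) w) = w := by
      intro w
      induction w using TensorProduct.induction_on with
      | zero => simp
      | tmul c g => simp [sys.p_j]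
      | add u v hu hv => simp [hu, hv]
    rw [h2] at h1
    exact h1
  rw [hzval] at hz
  have hA : TensorProduct.map (LinearMap.id : A →ₗ[K] A) π (AB.comul (j b))
      = j (CC.str.symm b) ⊗ₜ[K] HB.one := by
    have hcomp : ∀ X : A ⊗[K] A,
        TensorProduct.map (LinearMap.id : A →ₗ[K] A) (HB.str ^ m).toLinearMap
          (TensorProduct.map (LinearMap.id : A →ₗ[K] A)
            ((HB.str ^ (-m)).toLinearMap ∘ₗ π) X)
        = TensorProduct.map (LinearMap.id : A →ₗ[K] A) π X := by
      intro X
      induction X using TensorProduct.induction_on with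
      | zero => simp
      | tmul x y =>
          simp only [TensorProduct.map_tmul, LinearMap.id_coe, id_eq, LinearMap.coe_comp,
            Function.comp_apply, LinearEquiv.coe_coe]
          congr 1
          rw [zpow_neg]
          exact (HB.str ^ m).apply_symm_apply _
      | add u v hu hv => simp only [map_add, hu, hv]
    have := hcomp (AB.comul (j b))
    rw [hz] at this
    rw [← this]
    simp only [TensorProduct.map_tmul, LinearMap.id_coe, id_eq, LinearEquiv.coe_coe]
    congr 1
    exact aux_zpow_fixed HB.str HB.one HB.str_one m
  -- Step 2: split
  have hsplit := sys.split (AB.mul (i h) (j b))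
  rw [AB.comul_mul, ← sys.i_comul] at hsplit
  rw [← hsplit]
  -- Step 3: key reduction
  have key : ∀ (t : H ⊗[K] H) (T : A ⊗[K] A),
      TensorProduct.lift AB.mul
        (TensorProduct.map (j ∘ₗ p) (i ∘ₗ π)
          (tensorSquareMul AB.mul (TensorProduct.map i i t) T))
      = auxRun HB AB j p i
          (t ⊗ₜ[K] TensorProduct.map (LinearMap.id : A →ₗ[K] A) π T) := by
    intro t T
    induction t using TensorProduct.induction_on with
    | zero => simp
    | tmul h1 h2 =>
        induction T using TensorProduct.induction_on with
        | zero => simp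
        | tmul x y =>
            simp only [TensorProduct.map_tmul, aux_tsm_tmul, auxRun, LinearMap.coe_comp,
              Function.comp_apply, LinearEquiv.coe_coe,
              TensorProduct.tensorTensorTensorComm_tmul, TensorProduct.lift.tmul,
              LinearMap.id_coe, id_eq]
            rw [sys.pi_mul, sys.pi_i]
        | add u v hu hv =>
            simp only [map_add, TensorProduct.tmul_add] at *
            rw [hu, hv]
    | add u v hu hv =>
        simp only [map_add, LinearMap.add_apply, TensorProduct.add_tmul] at *
        rw [hu, hv]
  rw [key, hA]
  -- Step 4: final reduction
  have final : ∀ t : H ⊗[K] H,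
      auxRun HB AB j p i (t ⊗ₜ[K] (j (CC.str.symm b) ⊗ₜ[K] HB.one))
      = TensorProduct.lift
          ((AB.mul ∘ₗ (j ∘ₗ p ∘ₗ (AB.mul.flip (j (CC.str.symm b))) ∘ₗ i)).compl₂
            (i ∘ₗ HB.str.toLinearMap)) t := by
    intro t
    induction t using TensorProduct.induction_on with
    | zero => simp
    | tmul h1 h2 =>
        simp only [auxRun, LinearMap.coe_comp, Function.comp_apply, LinearEquiv.coe_coe,
          TensorProduct.tensorTensorTensorComm_tmul, TensorProduct.map_tmul,
          TensorProduct.lift.tmul, LinearMap.compl₂_apply, LinearMap.flip_apply]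
        rw [HB.mul_one]
    | add u v hu hv =>
        simp only [TensorProduct.add_tmul, map_add] at *
        rw [hu, hv]
  exact final (HB.comul h)
end
end

section
/- Let C ⇄ A ⇄ H (with maps j, p, i, π) be a weak m-Hom admissible mapping system, where (C ♯_σ^× H, β ⊗ α) is a Radford [(m,k),m]-biproduct monoidal Hom-bialgebra whose smash-coproduct structure uses the left H-coaction c ↦ c₍₋₁₎ ⊗ c₍₀₎ on C. Then for all a ∈ A: α^{m+1}((p(a₁))₍₋₁₎) π(a₂) ⊗ β((p(a₁))₍₀₎) = α(π(a₁)) ⊗ p(a₂). -/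
open TensorProduct

noncomputable section

section Aux

variable {K C H A : Type*} [Field K] [AddCommGroup C] [Module K C] [AddCommGroup H] [Module K H]
    [AddCommGroup A] [Module K A]

lemma zpow_apply_zpow (e : H ≃ₗ[K] H) (s t : ℤ) (x : H) :
    (e ^ s) ((e ^ t) x) = (e ^ (s + t)) x := by rw [zpow_add]; rfl

lemma counit_zpow (HB : HomBialgebraStr K H) (n : ℤ) :
    ∀ h, HB.counit ((HB.str ^ n) h) = HB.counit h := by
  have hsym : ∀ h, HB.counit (HB.str.symm h) = HB.counit h := by
    intro h; conv_rhs => rw [← HB.str.apply_symm_apply h, HB.counit_str]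
  induction n using Int.induction_on with
  | zero => intro h; simp
  | succ n ih =>
      intro h
      have : (HB.str ^ ((n : ℤ) + 1)) h = (HB.str ^ (n : ℤ)) (HB.str h) := by
        rw [zpow_add]; rfl
      rw [this, ih, HB.counit_str]
  | pred n ih =>
      intro h
      have h1 : (HB.str ^ (-1 : ℤ)) h = HB.str.symm h := by rw [zpow_neg_one]; rfl
      have : (HB.str ^ (-(n : ℤ) - 1)) h = (HB.str ^ (-(n : ℤ))) (HB.str.symm h) := by
        rw [← h1, zpow_apply_zpow, sub_eq_add_neg]
      rw [this, ih, hsym]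

lemma coactMulAux_tmul {M : Type*} [AddCommGroup M] [Module K M]
    (HB : HomBialgebraStr K H) (jj : ℤ) (f : M →ₗ[K] M) (n : H) (w : M) (t : H) :
    coactMulAux HB jj f ((n ⊗ₜ[K] w) ⊗ₜ[K] t)
      = (HB.mul ((HB.str ^ jj) n) t) ⊗ₜ[K] f w := by
  simp [coactMulAux]

lemma tensorSquareMul_tmul (AB : HomBialgebraStr K A) (a b c d : A) :
    tensorSquareMul AB.mul (a ⊗ₜ[K] b) (c ⊗ₜ[K] d)
      = AB.mul a c ⊗ₜ[K] AB.mul b d := by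
  simp [tensorSquareMul]

lemma comul_lift_mul (AB : HomBialgebraStr K A) (w : A ⊗[K] A) :
    AB.comul (TensorProduct.lift AB.mul w)
      = TensorProduct.lift (tensorSquareMul AB.mul)
          (TensorProduct.map AB.comul AB.comul w) := by
  induction w using TensorProduct.induction_on with
  | zero => simp
  | tmul a b => simp [AB.comul_mul]
  | add x y hx hy => simp [hx, hy]

end Aux
/-- Equation (4.1) in the proof of Theorem 4.11:
`α^{m+1}((p(a₁))₍₋₁₎) π(a₂) ⊗ β((p(a₁))₍₀₎) = α(π(a₁)) ⊗ p(a₂)`. -/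
theorem admissible_system_coaction_identity
    {K C H A : Type*} [Field K] [AddCommGroup C] [Module K C] [AddCommGroup H] [Module K H]
    [AddCommGroup A] [Module K A]
    (HB : HomBialgebraStr K H) (CA : HomAlgebraStr K C) (CC : HomCoalgebraStr K C)
    (act : H →ₗ[K] C →ₗ[K] C) (hact : IsWeakModuleAlgebra HB CA act)
    (coact : C →ₗ[K] H ⊗[K] C) (hcc : IsComoduleCoalgebra HB CC coact)
    (σ : H →ₗ[K] H →ₗ[K] C) (m k : ℤ)
    (B : HomBialgebraStr K (C ⊗[K] H))
    (hB : IsRadfordBiproduct HB CA CC act coact σ m k B)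
    (AB : HomBialgebraStr K A)
    (j : C →ₗ[K] A) (p : A →ₗ[K] C) (i : H →ₗ[K] A) (π : A →ₗ[K] H)
    (sys : WeakAdmissibleSystem HB CA CC coact m AB j p i π) :
    ∀ a : A,
      coactMulAux HB (m+1) CC.str.toLinearMap
          (TensorProduct.map (coact ∘ₗ p) π (AB.comul a))
        = TensorProduct.map (HB.str.toLinearMap ∘ₗ π) p (AB.comul a) := by
  intro a
  -- Step 0: rewrite `coact (p u)` via the mapping-system compatibility `p_col`.
  have hy : ∀ u : A, coact (p u)
      = TensorProduct.map ((HB.str ^ (-m)).toLinearMap ∘ₗ π) p (AB.comul (j (p u))) := by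
    intro u
    rw [← sys.p_col (p u)]
    generalize AB.comul (j (p u)) = W
    induction W using TensorProduct.induction_on with
    | zero => simp
    | tmul x y => simp
    | add x y hx hy => simp only [map_add, hx, hy]
  -- Step 1: shifting the structure-map powers.
  have key1 : ∀ (X : A ⊗[K] A) (t : H),
      coactMulAux HB (m+1) CC.str.toLinearMap
        (TensorProduct.map ((HB.str ^ (-m)).toLinearMap ∘ₗ π) p X ⊗ₜ[K] t)
      = coactMulAux HB 0 CC.str.toLinearMap
        (TensorProduct.map (HB.str.toLinearMap ∘ₗ π) p X ⊗ₜ[K] t) := by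
    intro X t
    induction X using TensorProduct.induction_on with
    | zero => simp
    | tmul x y =>
        simp only [TensorProduct.map_tmul, LinearMap.coe_comp, Function.comp_apply,
          LinearEquiv.coe_coe, coactMulAux_tmul, zpow_apply_zpow]
        norm_num
    | add x y hx hy =>
        simp only [map_add, TensorProduct.add_tmul, hx, hy]
  -- Step 2: the crossed-product computation.
  have key2 : ∀ (X : A ⊗[K] A) (Z : H ⊗[K] H),
      TensorProduct.map (HB.str.toLinearMap ∘ₗ π) p
          (tensorSquareMul AB.mul X (TensorProduct.map i i Z))
        = coactMulAux HB 0 CC.str.toLinearMap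
            ((TensorProduct.map (HB.str.toLinearMap ∘ₗ π) p X) ⊗ₜ[K]
              HB.str (TensorProduct.rid K H
                (TensorProduct.map (LinearMap.id : H →ₗ[K] H) HB.counit Z))) := by
    intro X Z
    induction X using TensorProduct.induction_on with
    | zero => simp
    | add x y hx hy =>
        simp only [map_add, LinearMap.add_apply, TensorProduct.add_tmul, hx, hy]
    | tmul x₁ x₂ =>
      induction Z using TensorProduct.induction_on with
      | zero => simp
      | add z w hz hw =>
          simp only [map_add, LinearMap.map_add, TensorProduct.tmul_add, hz, hw]
      | tmul g₁ g₂ =>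
          have hg : i g₂ = i ((HB.str ^ (-m)) ((HB.str ^ m) g₂)) := by
            rw [zpow_apply_zpow]
            norm_num
          rw [TensorProduct.map_tmul, tensorSquareMul_tmul AB, TensorProduct.map_tmul]
          rw [LinearMap.comp_apply, sys.pi_mul, sys.pi_i]
          conv_lhs => rw [hg]
          rw [sys.p_right_act x₂ ((HB.str ^ m) g₂), counit_zpow HB m g₂]
          simp only [TensorProduct.map_tmul, LinearMap.id_coe, id_eq]
          rw [TensorProduct.rid_tmul, map_smul, TensorProduct.tmul_smul,
            TensorProduct.tmul_smul, map_smul, coactMulAux_tmul]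
          simp only [LinearEquiv.coe_coe, HB.str_mul]
          norm_num
  -- Step 3: re-express the comultiplication of `a` using the splitting.
  have h1 : AB.comul a
      = TensorProduct.lift (tensorSquareMul AB.mul)
          (TensorProduct.map AB.comul AB.comul
            (TensorProduct.map (j ∘ₗ p) (i ∘ₗ π) (AB.comul a))) := by
    conv_lhs => rw [← sys.split a, comul_lift_mul]
  conv_rhs => rw [h1]
  generalize AB.comul a = D
  induction D using TensorProduct.induction_on with
  | zero => simp
  | add x y hx hy => simp only [map_add, hx, hy]
  | tmul u v =>
      simp only [TensorProduct.map_tmul, LinearMap.coe_comp, Function.comp_apply,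
        TensorProduct.lift.tmul]
      rw [hy u, key1, ← sys.i_comul (π v),
        key2 (AB.comul (j (p u))) (HB.comul (π v)), HB.counit_comul_right (π v),
        LinearEquiv.apply_symm_apply]
end
end
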